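/- (Proposition 7.1) For every Q-graph D, every X in {W,E} and every X-edge d of D, there is a construction G of a global Q-graph whose root graph is D and such that NX(G)=SX(G)=d. -/

import Mathlib

namespace PluralCuts

/-- The two horizontal directions: west and east. -/
inductive XDir : Type
  | W
  | E
deriving DecidableEq

/-- The two vertical directions: north and south. -/
inductive YDir : Type
  | N
  | S
deriving DecidableEq

/-- The other element of `{W, E}`. -/
def XDir.other : XDir → XDir
  | .W => .E
  | .E => .W

/-- A helper choosing between two values according to an `XDir`. -/
def pick {α : Type*} (w e : α) : XDir → α
  | .W => w
  | .E => e

/-- A digraph on (a finite set of) natural-number vertices: a finite set of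
vertices together with a finite set of edges (ordered pairs). -/
structure DG : Type where
  verts : Finset ℕ
  edges : Finset (ℕ × ℕ)

namespace DG

/-- `D` is an oriented graph: edges lie between vertices, the edge relation is
irreflexive and antisymmetric, and the vertex set is nonempty. -/
def IsOriented (D : DG) : Prop :=
  (∀ e ∈ D.edges, e.1 ∈ D.verts ∧ e.2 ∈ D.verts) ∧
  (∀ e ∈ D.edges, e.1 ≠ e.2) ∧
  (∀ a b : ℕ, (a, b) ∈ D.edges → (b, a) ∉ D.edges) ∧
  D.verts.Nonempty

/-- A `W`-vertex: no edge ends in it. -/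
def isWVert (D : DG) (a : ℕ) : Prop := a ∈ D.verts ∧ ∀ b, (b, a) ∉ D.edges

/-- An `E`-vertex: no edge begins in it. -/
def isEVert (D : DG) (a : ℕ) : Prop := a ∈ D.verts ∧ ∀ b, (a, b) ∉ D.edges

/-- An inner vertex: some edge ends in it and some edge begins in it. -/
def isInner (D : DG) (a : ℕ) : Prop :=
  a ∈ D.verts ∧ (∃ b, (b, a) ∈ D.edges) ∧ (∃ b, (a, b) ∈ D.edges)

/-- A `W`-edge: an edge beginning in a `W`-vertex. -/
def isWEdge (D : DG) (e : ℕ × ℕ) : Prop := e ∈ D.edges ∧ D.isWVert e.1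

/-- An `E`-edge: an edge ending in an `E`-vertex. -/
def isEEdge (D : DG) (e : ℕ × ℕ) : Prop := e ∈ D.edges ∧ D.isEVert e.2

/-- An `X`-edge, for `X ∈ {W, E}`. -/
def isXEdge (D : DG) : XDir → (ℕ × ℕ) → Prop
  | .W => D.isWEdge
  | .E => D.isEEdge

/-- An inner edge: it begins and ends in inner vertices. -/
def isInnerEdge (D : DG) (e : ℕ × ℕ) : Prop :=
  e ∈ D.edges ∧ D.isInner e.1 ∧ D.isInner e.2

/-- A functional `W`-edge `(a,b)`: `(a,c) ∈ D` implies `b = c`. -/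
def funcWEdge (D : DG) (e : ℕ × ℕ) : Prop :=
  D.isWEdge e ∧ ∀ c, (e.1, c) ∈ D.edges → c = e.2

/-- A functional `E`-edge `(b,a)`: `(c,a) ∈ D` implies `b = c`. -/
def funcEEdge (D : DG) (e : ℕ × ℕ) : Prop :=
  D.isEEdge e ∧ ∀ c, (c, e.2) ∈ D.edges → c = e.1

/-- `D` is `W`-`E`-functional: all its `W`-edges and `E`-edges are functional. -/
def WEFunctional (D : DG) : Prop :=
  (∀ e, D.isWEdge e → D.funcWEdge e) ∧ (∀ e, D.isEEdge e → D.funcEEdge e)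

/-- Semi-adjacency: `(a,b)` or `(b,a)` is an edge. -/
def semiAdj (D : DG) (a b : ℕ) : Prop := (a, b) ∈ D.edges ∨ (b, a) ∈ D.edges

/-- A semipath: a nonempty sequence of mutually distinct vertices in which any
two consecutive vertices are semi-adjacent. -/
def IsSemipath (D : DG) (l : List ℕ) : Prop :=
  l ≠ [] ∧ (∀ a ∈ l, a ∈ D.verts) ∧ l.Nodup ∧ l.Chain' D.semiAdj

/-- A path: a nonempty sequence of mutually distinct vertices in which
`(a_i, a_{i+1})` is an edge for consecutive vertices. -/
def IsPath (D : DG) (l : List ℕ) : Prop :=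
  l ≠ [] ∧ (∀ a ∈ l, a ∈ D.verts) ∧ l.Nodup ∧
    l.Chain' (fun a b => (a, b) ∈ D.edges)

/-- A semicycle: a sequence `a_1, ..., a_n` of vertices with `n ≥ 4`,
`a_1 = a_n`, `a_1, ..., a_{n-1}` mutually distinct, and consecutive vertices
semi-adjacent. -/
def IsSemicycle (D : DG) (l : List ℕ) : Prop :=
  4 ≤ l.length ∧ (∀ a ∈ l, a ∈ D.verts) ∧ l.head? = l.getLast? ∧
  l.dropLast.Nodup ∧ l.Chain' D.semiAdj

/-- `D` is weakly connected: every two vertices are joined by a semipath. -/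
def WeaklyConnected (D : DG) : Prop :=
  ∀ a ∈ D.verts, ∀ b ∈ D.verts,
    ∃ l, D.IsSemipath l ∧ l.head? = some a ∧ l.getLast? = some b

/-- `D` is asemicyclic: it has no semicycles. -/
def Asemicyclic (D : DG) : Prop := ∀ l, ¬ D.IsSemicycle l

/-- The cut `D_W[e_W - e_E]D_E`:
`(D_W - {e_W}) ∪ (D_E - {e_E}) ∪ {(e_W.1, e_E.2)}` on the union of the vertex
sets with `e_W.2` and `e_E.1` omitted. -/
def cut (DW DE : DG) (eW eE : ℕ × ℕ) : DG where
  verts := (DW.verts ∪ DE.verts) \ {eW.2, eE.1}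
  edges := insert (eW.1, eE.2) ((DW.edges.erase eW) ∪ (DE.edges.erase eE))

end DG

/-- The type of assignments of four distinguished edges `NW, SW, NE, SE`. -/
abbrev DistE : Type := YDir → XDir → ℕ × ℕ

/-- The type of labellings assigning to (inner) vertices four edges. -/
abbrev Lab : Type := ℕ → YDir → XDir → ℕ × ℕ

/-- `⟨D, ε⟩` is a basic K-graph: `D` is an oriented graph with a single inner
vertex `b`, all edges begin or end in `b`, every other vertex is joined to `b`
by an edge, there is at least one edge ending in `b` and one beginning in `b`,
the distinguished edges `ε Y W` end in `b` and `ε Y E` begin in `b`, and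
(XYB): if there are at least two `X`-edges then `NX ≠ SX`. -/
def IsBasicK (D : DG) (ε : DistE) : Prop :=
  D.IsOriented ∧
  ∃ b ∈ D.verts,
    (∀ e ∈ D.edges, e.1 = b ∨ e.2 = b) ∧
    (∀ v ∈ D.verts, v = b ∨ (v, b) ∈ D.edges ∨ (b, v) ∈ D.edges) ∧
    (∃ a, (a, b) ∈ D.edges) ∧ (∃ c, (b, c) ∈ D.edges) ∧
    (∀ Y : YDir, ε Y XDir.W ∈ D.edges ∧ (ε Y XDir.W).2 = b ∧
      ε Y XDir.E ∈ D.edges ∧ (ε Y XDir.E).1 = b) ∧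
    (2 ≤ (D.edges.filter (fun e => e.2 = b)).card →
      ε YDir.N XDir.W ≠ ε YDir.S XDir.W) ∧
    (2 ≤ (D.edges.filter (fun e => e.1 = b)).card →
      ε YDir.N XDir.E ≠ ε YDir.S XDir.E)

/-- `⟨D, ε⟩` is a basic Q-graph: as a basic K-graph but with no requirement
(XYB) on the distinguished edges. -/
def IsBasicQ (D : DG) (ε : DistE) : Prop :=
  D.IsOriented ∧
  ∃ b ∈ D.verts,
    (∀ e ∈ D.edges, e.1 = b ∨ e.2 = b) ∧
    (∀ v ∈ D.verts, v = b ∨ (v, b) ∈ D.edges ∨ (b, v) ∈ D.edges) ∧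
    (∃ a, (a, b) ∈ D.edges) ∧ (∃ c, (b, c) ∈ D.edges) ∧
    (∀ Y : YDir, ε Y XDir.W ∈ D.edges ∧ (ε Y XDir.W).2 = b ∧
      ε Y XDir.E ∈ D.edges ∧ (ε Y XDir.E).1 = b)

/-- Finite binary trees whose nodes carry an oriented graph, four
distinguished edges, and (at internal nodes) the two cut edges. -/
inductive CTree : Type
  | leaf (D : DG) (ε : DistE)
  | node (D : DG) (ε : DistE) (eW eE : ℕ × ℕ) (l r : CTree)

namespace CTree

/-- The graph at the root of the tree. -/
def rootGraph : CTree → DG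
  | .leaf D _ => D
  | .node D _ _ _ _ _ => D

/-- The distinguished edges at the root of the tree. -/
def dist : CTree → DistE
  | .leaf _ ε => ε
  | .node _ ε _ _ _ _ => ε

/-- The list of graphs-with-distinguished-edges at the leaves of the tree
(the basic K-graphs determining the leaves of a construction). -/
def leaves : CTree → List (DG × DistE)
  | .leaf D ε => [(D, ε)]
  | .node _ _ _ _ l r => l.leaves ++ r.leaves

end CTree

/-- The tree `G_W[e_W - e_E]G_E`, whose root graph is the cut of the root
graphs and whose distinguished edges are given by (XYD). -/
def mkNode (GW GE : CTree) (eW eE : ℕ × ℕ) : CTree :=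
  .node (DG.cut GW.rootGraph GE.rootGraph eW eE)
    (fun Y X =>
      match X with
      | .W => if eE = GE.dist Y XDir.W then GW.dist Y XDir.W else GE.dist Y XDir.W
      | .E => if eW = GW.dist Y XDir.E then GE.dist Y XDir.E else GW.dist Y XDir.E)
    eW eE GW GE

/-- The inductive notion of construction (of a global K-graph). -/
inductive IsConstruction : CTree → Prop
  | leaf (D : DG) (ε : DistE) (h : IsBasicK D ε) : IsConstruction (.leaf D ε)
  | node (D : DG) (ε : DistE) (eW eE : ℕ × ℕ) (GW GE : CTree)
      (hW : IsConstruction GW) (hE : IsConstruction GE)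
      (hdisj : Disjoint GW.rootGraph.verts GE.rootGraph.verts)
      (heW : GW.rootGraph.funcEEdge eW)
      (heE : GE.rootGraph.funcWEdge eE)
      (hD : D = DG.cut GW.rootGraph GE.rootGraph eW eE)
      (hXYC : ∀ Y : YDir, eW = GW.dist Y XDir.E ∨ eE = GE.dist Y XDir.W)
      (hεW : ∀ Y : YDir, ε Y XDir.W =
        if eE = GE.dist Y XDir.W then GW.dist Y XDir.W else GE.dist Y XDir.W)
      (hεE : ∀ Y : YDir, ε Y XDir.E =
        if eW = GW.dist Y XDir.E then GE.dist Y XDir.E else GW.dist Y XDir.E) :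
      IsConstruction (.node D ε eW eE GW GE)

/-- The inductive notion of construction of a global Q-graph: as
`IsConstruction` but with basic Q-graphs at the leaves. -/
inductive IsConstructionQ : CTree → Prop
  | leaf (D : DG) (ε : DistE) (h : IsBasicQ D ε) : IsConstructionQ (.leaf D ε)
  | node (D : DG) (ε : DistE) (eW eE : ℕ × ℕ) (GW GE : CTree)
      (hW : IsConstructionQ GW) (hE : IsConstructionQ GE)
      (hdisj : Disjoint GW.rootGraph.verts GE.rootGraph.verts)
      (heW : GW.rootGraph.funcEEdge eW)
      (heE : GE.rootGraph.funcWEdge eE)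
      (hD : D = DG.cut GW.rootGraph GE.rootGraph eW eE)
      (hXYC : ∀ Y : YDir, eW = GW.dist Y XDir.E ∨ eE = GE.dist Y XDir.W)
      (hεW : ∀ Y : YDir, ε Y XDir.W =
        if eE = GE.dist Y XDir.W then GW.dist Y XDir.W else GE.dist Y XDir.W)
      (hεE : ∀ Y : YDir, ε Y XDir.E =
        if eW = GW.dist Y XDir.E then GE.dist Y XDir.E else GW.dist Y XDir.E) :
      IsConstructionQ (.node D ε eW eE GW GE)

/-- ρ-equivalence of constructions: the least equivalence relation containing
ρ1, ρ2, ρ3 and closed under congruence with respect to cuts. -/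
inductive RhoEquiv : CTree → CTree → Prop
  | rho1 (P Q R : CTree) (eW eE fW fE : ℕ × ℕ)
      (hP : IsConstruction P) (hQ : IsConstruction Q) (hR : IsConstruction R)
      (heW : P.rootGraph.isEEdge eW) (hfW : Q.rootGraph.isEEdge fW)
      (heE : Q.rootGraph.isWEdge eE) (hfE : R.rootGraph.isWEdge fE)
      (h1 : IsConstruction (mkNode (mkNode P Q eW eE) R fW fE))
      (h2 : IsConstruction (mkNode P (mkNode Q R fW fE) eW eE)) :
      RhoEquiv (mkNode (mkNode P Q eW eE) R fW fE)
               (mkNode P (mkNode Q R fW fE) eW eE)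
  | rho2 (P Q R : CTree) (eW eE fW fE : ℕ × ℕ)
      (hP : IsConstruction P) (hQ : IsConstruction Q) (hR : IsConstruction R)
      (heW : P.rootGraph.isEEdge eW) (hfW : P.rootGraph.isEEdge fW)
      (hne : eW ≠ fW)
      (heE : Q.rootGraph.isWEdge eE) (hfE : R.rootGraph.isWEdge fE)
      (h1 : IsConstruction (mkNode (mkNode P Q eW eE) R fW fE))
      (h2 : IsConstruction (mkNode (mkNode P R fW fE) Q eW eE)) :
      RhoEquiv (mkNode (mkNode P Q eW eE) R fW fE)
               (mkNode (mkNode P R fW fE) Q eW eE)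
  | rho3 (P Q R : CTree) (eW eE fW fE : ℕ × ℕ)
      (hP : IsConstruction P) (hQ : IsConstruction Q) (hR : IsConstruction R)
      (heE : P.rootGraph.isWEdge eE) (hfE : P.rootGraph.isWEdge fE)
      (hne : eE ≠ fE)
      (heW : Q.rootGraph.isEEdge eW) (hfW : R.rootGraph.isEEdge fW)
      (h1 : IsConstruction (mkNode R (mkNode Q P eW eE) fW fE))
      (h2 : IsConstruction (mkNode Q (mkNode R P fW fE) eW eE)) :
      RhoEquiv (mkNode R (mkNode Q P eW eE) fW fE)
               (mkNode Q (mkNode R P fW fE) eW eE)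
  | congr (G1 G2 H1 H2 : CTree) (eW eE : ℕ × ℕ)
      (h12 : RhoEquiv G1 G2) (h34 : RhoEquiv H1 H2)
      (hc1 : IsConstruction (mkNode G1 H1 eW eE))
      (hc2 : IsConstruction (mkNode G2 H2 eW eE)) :
      RhoEquiv (mkNode G1 H1 eW eE) (mkNode G2 H2 eW eE)
  | refl (G : CTree) (h : IsConstruction G) : RhoEquiv G G
  | symm {G H : CTree} (h : RhoEquiv G H) : RhoEquiv H G
  | trans {G H K : CTree} (h1 : RhoEquiv G H) (h2 : RhoEquiv H K) :
      RhoEquiv G K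

/-- The class `[G]`: all constructions with the same root graph as `G` whose
leaves are determined by the same basic K-graphs as those of `G`. -/
def classOf (G : CTree) : Set CTree :=
  {H | IsConstruction H ∧ H.rootGraph = G.rootGraph ∧
    ∀ p : DG × DistE, p ∈ H.leaves ↔ p ∈ G.leaves}

/-- Renaming the vertices of a digraph along a function. -/
def DG.rename (f : ℕ → ℕ) (D : DG) : DG where
  verts := D.verts.image f
  edges := D.edges.image (fun e => (f e.1, f e.2))

/-- Renaming the vertices throughout a tree. -/
def CTree.rename (f : ℕ → ℕ) : CTree → CTree
  | .leaf D ε => .leaf (DG.rename f D) (fun Y X => (f (ε Y X).1, f (ε Y X).2))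
  | .node D ε eW eE l r =>
      .node (DG.rename f D) (fun Y X => (f (ε Y X).1, f (ε Y X).2))
        (f eW.1, f eW.2) (f eE.1, f eE.2) (l.rename f) (r.rename f)

/-- σ-equivalence: `H` is obtained from `G` by a bijective renaming of
vertices that fixes the root vertices (so only secondary vertices may be
renamed). -/
def SigmaEquiv (G H : CTree) : Prop :=
  ∃ f : ℕ ≃ ℕ, (∀ v ∈ G.rootGraph.verts, f v = v) ∧ H = G.rename f

/-- The global compass graph `‖G‖`: all constructions σ-equivalent to a
construction in `[G]`. -/
def normClass (G : CTree) : Set CTree :=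
  {H | ∃ K ∈ classOf G, SigmaEquiv K H}

/-- The labelling `L` of `λ(G) = ⟨D, L⟩`, defined by induction on `G`: at a
leaf given by a basic K-graph with inner vertex `b`, `YX(b) = YX(B)`; at a
node, the value is inherited from the appropriate subtree unless it is one of
the two cut edges, in which case it is the new edge introduced by the cut. -/
def lamG : CTree → Lab
  | .leaf _ ε => fun _ => ε
  | .node _ _ eW eE l r => fun a Y X =>
      let v := if a ∈ l.rootGraph.verts then lamG l a Y X else lamG r a Y X
      if v = eW ∨ v = eE then (eW.1, eE.2) else v

/-- `L` assigns to every inner vertex `a` edges `L a Y W` ending in `a` and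
edges `L a Y E` beginning in `a`. -/
def ProperLab (D : DG) (L : Lab) : Prop :=
  ∀ a, D.isInner a → ∀ Y : YDir,
    L a Y XDir.W ∈ D.edges ∧ (L a Y XDir.W).2 = a ∧
    L a Y XDir.E ∈ D.edges ∧ (L a Y XDir.E).1 = a

/-- `⟨D, L⟩` separates `N` from `S`. -/
def SeparatesNS (D : DG) (L : Lab) : Prop :=
  ∀ a, D.isInner a →
    (2 ≤ (D.edges.filter (fun e => e.2 = a)).card →
      L a YDir.N XDir.W ≠ L a YDir.S XDir.W) ∧
    (2 ≤ (D.edges.filter (fun e => e.1 = a)).card →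
      L a YDir.N XDir.E ≠ L a YDir.S XDir.E)

/-- A list `a_1, ..., a_n` is `Y`-decent in `⟨D, L⟩`: `n = 1`, or
`YE(a_1) = (a_1, a_2)`, or `YW(a_n) = (a_{n-1}, a_n)`. -/
def Ydecent (L : Lab) (Y : YDir) (l : List ℕ) : Prop :=
  ∀ a b t, l = a :: b :: t →
    (L a Y XDir.E = (a, b) ∨
      ∃ c d t', l.reverse = d :: c :: t' ∧ L d Y XDir.W = (c, d))

/-- `⟨D, L⟩` is a local compass graph. -/
def IsLocalCompass (D : DG) (L : Lab) : Prop :=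
  D.IsOriented ∧ ProperLab D L ∧
  D.WeaklyConnected ∧ D.Asemicyclic ∧ D.WEFunctional ∧ (∃ a, D.isInner a) ∧
  SeparatesNS D L ∧
  (∀ l, D.IsPath l → Ydecent L YDir.N l ∧ Ydecent L YDir.S l)

/-- A path (list) covers an edge `g` when `g` is a pair of consecutive
vertices of the list. -/
def covers (l : List ℕ) (g : ℕ × ℕ) : Prop := g ∈ l.zip l.tail

/-- A `YX`-edge in `⟨D, L⟩`. -/
def YXedge (D : DG) (L : Lab) (Y : YDir) : XDir → (ℕ × ℕ) → Prop
  | .W, g => g ∈ D.edges ∧ (L g.2 Y XDir.W = g ∨ D.isEEdge g)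
  | .E, g => g ∈ D.edges ∧ (L g.1 Y XDir.E = g ∨ D.isWEdge g)

/-- A proper semipath: a semipath such that neither it nor its reverse is a
path. -/
def ProperSemipath (D : DG) (l : List ℕ) : Prop :=
  D.IsSemipath l ∧ ¬ D.IsPath l ∧ ¬ D.IsPath l.reverse

/-- A transversal edge `(a,b)`: there is a proper semipath beginning with
`a, b` and a proper semipath beginning with `b, a`. -/
def Transversal (D : DG) (e : ℕ × ℕ) : Prop :=
  e ∈ D.edges ∧
  (∃ t, ProperSemipath D (e.1 :: e.2 :: t)) ∧
  (∃ t, ProperSemipath D (e.2 :: e.1 :: t))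

/-- The edge of `D` that connects two semi-adjacent vertices `a` and `b`. -/
def connEdge (D : DG) (a b : ℕ) : ℕ × ℕ :=
  if (a, b) ∈ D.edges then (a, b) else (b, a)

/-- The connecting edges of a list: the edges connecting its consecutive
vertices. -/
def connEdges (D : DG) (l : List ℕ) (e : ℕ × ℕ) : Prop :=
  ∃ p ∈ l.zip l.tail, e = connEdge D p.1 p.2

/-- A bifurcation: three distinct edges with a common vertex. -/
def Bifurcation (D : DG) (e1 e2 e3 : ℕ × ℕ) : Prop :=
  e1 ∈ D.edges ∧ e2 ∈ D.edges ∧ e3 ∈ D.edges ∧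
  e1 ≠ e2 ∧ e1 ≠ e3 ∧ e2 ≠ e3 ∧
  ∃ v, (v = e1.1 ∨ v = e1.2) ∧ (v = e2.1 ∨ v = e2.2) ∧ (v = e3.1 ∨ v = e3.2)

/-- A K-graph: a weakly connected, asemicyclic, `W`-`E`-functional oriented
graph with an inner vertex in which no bifurcation is transversal. -/
def IsKGraph (D : DG) : Prop :=
  D.IsOriented ∧ D.WeaklyConnected ∧ D.Asemicyclic ∧ D.WEFunctional ∧
  (∃ a, D.isInner a) ∧
  ∀ e1 e2 e3, Bifurcation D e1 e2 e3 →
    ¬ (Transversal D e1 ∧ Transversal D e2 ∧ Transversal D e3)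

/-- A Q-graph: a weakly connected, asemicyclic, `W`-`E`-functional oriented
graph with an inner vertex. -/
def IsQGraph (D : DG) : Prop :=
  D.IsOriented ∧ D.WeaklyConnected ∧ D.Asemicyclic ∧ D.WEFunctional ∧
  ∃ a, D.isInner a



section Helpers

set_option maxHeartbeats 1000000

lemma chainGet {R : ℕ → ℕ → Prop} {l : List ℕ} (h : l.Chain' R) {i : ℕ}
    (hi : i + 1 < l.length) : R l[i] l[i+1] := by
  rw [List.Chain', List.isChain_iff_getElem] at h
  simpa using h i (by omega)

lemma chain_ofGet {R : ℕ → ℕ → Prop} {l : List ℕ}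
    (h : ∀ i (hi : i + 1 < l.length), R l[i] l[i+1]) : l.Chain' R := by
  rw [List.Chain', List.isChain_iff_getElem]
  intro i hi
  simpa using h i (by omega)

lemma getElem_idx_congr {l : List ℕ} {i j : ℕ} (h : i = j) (hi : i < l.length) :
    l[i] = l[j]'(h ▸ hi) := by subst h; rfl

lemma head?_getElem {l : List ℕ} {a : ℕ} (h : l.head? = some a) :
    ∃ h0 : 0 < l.length, l[0] = a := by
  rw [List.head?_eq_getElem?] at h
  rcases List.getElem?_eq_some_iff.1 h with ⟨h0, h1⟩
  exact ⟨h0, h1⟩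

lemma getLast?_getElem {l : List ℕ} {a : ℕ} (h : l.getLast? = some a) :
    ∃ h0 : l.length - 1 < l.length, l[l.length - 1] = a := by
  rw [List.getLast?_eq_getElem?] at h
  rcases List.getElem?_eq_some_iff.1 h with ⟨h0, h1⟩
  exact ⟨h0, h1⟩

lemma getLast?_cons_ne {v : ℕ} {r : List ℕ} (h : r ≠ []) :
    (v::r).getLast? = r.getLast? := by
  rcases r with _ | ⟨x, t⟩
  · exact absurd rfl h
  · rw [show v :: x :: t = [v] ++ (x :: t) by simp, List.getLast?_append]
    simp [List.getLast?_cons]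

lemma chain'_imp_mem {R S : ℕ → ℕ → Prop} {l : List ℕ} (h : l.Chain' R)
    (hs : ∀ x ∈ l, ∀ y ∈ l, R x y → S x y) : l.Chain' S := by
  refine chain_ofGet fun i hi => ?_
  exact hs _ (List.getElem_mem _) _ (List.getElem_mem _) (chainGet h hi)

lemma nodup_idx {l : List ℕ} (hn : 4 ≤ l.length) (hnd : l.dropLast.Nodup) :
    ∀ i j (hi : i < l.length - 1) (hj : j < l.length - 1),
      l[i]'(by omega) = l[j]'(by omega) → i = j := by
  intro i j hi hj hij
  have hdl : l.dropLast.length = l.length - 1 := List.length_dropLast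
  have hi' : i < l.dropLast.length := by omega
  have hj' : j < l.dropLast.length := by omega
  have e1 : l.dropLast[i]'hi' = l[i]'(by omega) := List.getElem_dropLast hi'
  have e2 : l.dropLast[j]'hj' = l[j]'(by omega) := List.getElem_dropLast hj'
  exact (hnd.getElem_inj_iff (hi := hi') (hj := hj')).1 (by rw [e1, e2]; exact hij)

lemma DG.semiAdj_symm {D : DG} {x y : ℕ} (h : D.semiAdj x y) : D.semiAdj y x := Or.symm h

/-- Semipath-connectivity between two vertices. -/
def SP (D : DG) (u v : ℕ) : Prop :=
  ∃ l, D.IsSemipath l ∧ l.head? = some u ∧ l.getLast? = some v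

lemma sp_refl {D : DG} {u : ℕ} (hu : u ∈ D.verts) : SP D u u :=
  ⟨[u], ⟨by simp, by simpa, by simp, by simp [List.Chain']⟩, by simp, by simp⟩

lemma sp_verts {D : DG} {u v : ℕ} (h : SP D u v) : u ∈ D.verts ∧ v ∈ D.verts := by
  rcases h with ⟨l, hl, hh, hg⟩
  obtain ⟨h0, e0⟩ := head?_getElem hh
  obtain ⟨h1, e1⟩ := getLast?_getElem hg
  exact ⟨e0 ▸ hl.2.1 _ (List.getElem_mem _), e1 ▸ hl.2.1 _ (List.getElem_mem _)⟩

lemma sp_reverse {D : DG} {u v : ℕ} (h : SP D u v) : SP D v u := by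
  rcases h with ⟨l, ⟨hne, hv, hnd, hch⟩, hh, hg⟩
  refine ⟨l.reverse, ⟨by simpa, by simpa using hv, by simpa, ?_⟩, by simpa, by simpa⟩
  rw [List.Chain', List.isChain_reverse]
  exact chain'_imp_mem hch fun x _ y _ hxy => hxy.symm

lemma sp_of_mem {D : DG} {l : List ℕ} {u x : ℕ} (hl : D.IsSemipath l)
    (hh : l.head? = some u) (hx : x ∈ l) : SP D u x := by
  obtain ⟨i, hi, rfl⟩ := List.mem_iff_getElem.1 hx
  obtain ⟨h0, e0⟩ := head?_getElem hh
  refine ⟨l.take (i+1), ⟨?_, ?_, hl.2.2.1.sublist (List.take_sublist _ _),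
    hl.2.2.2.prefix (List.take_prefix _ _)⟩, ?_, ?_⟩
  · have hlen : (l.take (i+1)).length = i + 1 := by
      rw [List.length_take]; omega
    intro h; rw [h] at hlen; simp at hlen
  · exact fun a ha => hl.2.1 a (List.mem_of_mem_take ha)
  · rw [List.head?_eq_getElem?]
    have hlen : (l.take (i+1)).length = i + 1 := by rw [List.length_take]; omega
    rw [List.getElem?_eq_getElem (by omega)]
    simp [List.getElem_take, e0]
  · rw [List.getLast?_eq_getElem?]
    have hlen : (l.take (i+1)).length = i + 1 := by rw [List.length_take]; omega
    rw [hlen]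
    rw [List.getElem?_eq_getElem (by omega)]
    simp [List.getElem_take]

lemma splice {D : DG} : ∀ (p : List ℕ), D.IsSemipath p → ∀ (q : List ℕ), D.IsSemipath q →
    p.getLast? = q.head? →
    ∃ r, D.IsSemipath r ∧ r.head? = p.head? ∧ r.getLast? = q.getLast? ∧
      ∀ x ∈ r, x ∈ p ∨ x ∈ q
  | [], hp, _, _, _ => absurd rfl hp.1
  | v :: p', hp, q, hq, hpq => by
    by_cases hvq : v ∈ q
    · obtain ⟨s, t, rfl⟩ := List.append_of_mem hvq
      refine ⟨v :: t, ⟨by simp, fun a ha => hq.2.1 a (List.mem_append_right s ha),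
        hq.2.2.1.sublist ((s.suffix_append _).sublist),
        hq.2.2.2.suffix (s.suffix_append _)⟩, by simp, ?_, ?_⟩
      · rw [List.getLast?_append]
        simp [List.getLast?_cons]
      · intro x hx; right; exact List.mem_append_right s hx
    · rcases p' with _ | ⟨v2, t'⟩
      · exfalso
        apply hvq
        have h : q.head? = some v := by simpa using hpq.symm
        rcases q with _ | ⟨q0, qt⟩
        · simp at h
        · simp at h; simp [h]
      · have hp' : D.IsSemipath (v2 :: t') :=
          ⟨by simp, fun a ha => hp.2.1 a (List.mem_cons_of_mem _ ha), hp.2.2.1.of_cons,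
            hp.2.2.2.tail⟩
        have hlast : (v2 :: t').getLast? = q.head? := by
          rw [← hpq, getLast?_cons_ne (by simp : (v2 :: t') ≠ [])]
        obtain ⟨r', hr', hh', hg', hmem'⟩ := splice (v2 :: t') hp' q hq hlast
        have hvr : v ∉ r' := by
          intro hv
          rcases hmem' v hv with h | h
          · have hnd := hp.2.2.1
            rcases List.mem_cons.1 h with rfl | h
            · simp at hnd
            · rw [List.nodup_cons] at hnd; exact hnd.1 (List.mem_cons_of_mem _ h)
          · exact hvq h
        refine ⟨v :: r', ⟨by simp, ?_, by simp [hr'.2.2.1, hvr], ?_⟩, by simp, ?_, ?_⟩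
        · rintro x hx
          rcases List.mem_cons.1 hx with rfl | hx
          · exact hp.2.1 x (by simp)
          · exact hr'.2.1 x hx
        · rw [List.Chain', List.isChain_cons]
          refine ⟨fun y hy => ?_, hr'.2.2.2⟩
          have : y = v2 := by rw [hh'] at hy; simpa using hy.symm
          subst this
          have hc := hp.2.2.2
          rw [List.Chain', List.isChain_cons_cons] at hc
          exact hc.1
        · rw [getLast?_cons_ne hr'.1, hg']
        · intro x hx
          rcases List.mem_cons.1 hx with rfl | hx
          · left; simp
          · rcases hmem' x hx with h | h
            · left; exact List.mem_cons_of_mem _ h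
            · right; exact h

lemma sp_trans {D : DG} {u v w : ℕ} (h1 : SP D u v) (h2 : SP D v w) : SP D u w := by
  rcases h1 with ⟨p, hp, hph, hpg⟩
  rcases h2 with ⟨q, hq, hqh, hqg⟩
  obtain ⟨r, hr, e1, e2, _⟩ := splice p hp q hq (by rw [hpg, hqh])
  exact ⟨r, hr, by rw [e1, hph], by rw [e2, hqg]⟩

lemma sp_step {D : DG} {u v x : ℕ} (h : SP D u v) (hadj : D.semiAdj v x)
    (hx : x ∈ D.verts) : SP D u x := by
  rcases h with ⟨l, hl, hh, hg⟩
  by_cases hxl : x ∈ l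
  · exact sp_of_mem hl hh hxl
  · refine ⟨l ++ [x], ⟨by simp, ?_, ?_, ?_⟩, ?_, ?_⟩
    · intro a ha
      rcases List.mem_append.1 ha with ha | ha
      · exact hl.2.1 a ha
      · simp at ha; subst ha; exact hx
    · simp [List.nodup_append, hl.2.2.1, hxl]; exact fun a ha h => hxl (h ▸ ha)
    · rw [List.Chain', List.isChain_append]
      refine ⟨hl.2.2.2, by simp, fun a ha b hb => ?_⟩
      rw [hg] at ha
      simp at ha hb
      subst ha; subst hb; exact hadj
    · rw [List.head?_append, hh]; rfl
    · simp [List.getLast?_append]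

lemma two_nbrs {D : DG} {l : List ℕ} (h : D.IsSemicycle l) {v : ℕ} (hv : v ∈ l) :
    ∃ x y, x ≠ y ∧ D.semiAdj v x ∧ D.semiAdj v y := by
  obtain ⟨hlen, hverts, hcyc, hnd, hch⟩ := h
  have hn : 4 ≤ l.length := hlen
  have h0 : l[0]'(by omega) = l[l.length - 1]'(by omega) := by
    have h1 : l.head? = some (l[0]'(by omega)) := by
      rw [List.head?_eq_getElem?, List.getElem?_eq_getElem]
    have h2 : l.getLast? = some (l[l.length-1]'(by omega)) := by
      rw [List.getLast?_eq_getElem?, List.getElem?_eq_getElem]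
    exact Option.some.inj (h1.symm.trans (hcyc.trans h2))
  have hinj := nodup_idx hn hnd
  obtain ⟨i0, hi0, hvi0⟩ := List.mem_iff_getElem.1 hv
  have hex : ∃ i, ∃ hi : i < l.length - 1, l[i]'(by omega) = v := by
    by_cases hc : i0 < l.length - 1
    · exact ⟨i0, hc, hvi0⟩
    · have hieq : i0 = l.length - 1 := by omega
      exact ⟨0, by omega, h0.trans ((getElem_idx_congr hieq hi0).symm.trans hvi0)⟩
  obtain ⟨i, hi, hvi⟩ := hex
  rcases Nat.eq_zero_or_pos i with rfl | hipos
  · refine ⟨l[1]'(by omega), l[l.length-2]'(by omega), ?_, ?_, ?_⟩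
    · intro he
      have hkk := hinj 1 (l.length - 2) (by omega) (by omega) he
      omega
    · have hc := chainGet hch (i := 0) (by omega)
      rw [hvi] at hc; exact hc
    · have h1 := chainGet hch (i := l.length - 2) (by omega)
      have e : l.length - 2 + 1 = l.length - 1 := by omega
      rw [getElem_idx_congr e (by omega), ← h0, hvi] at h1
      exact DG.semiAdj_symm h1
  · obtain ⟨k, hik⟩ : ∃ k, i = k + 1 := ⟨i - 1, by omega⟩
    subst hik
    refine ⟨l[k]'(by omega), l[k+2]'(by omega), ?_, ?_, ?_⟩
    · intro he
      by_cases hk2 : k + 2 < l.length - 1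
      · have hkk := hinj k (k+2) (by omega) hk2 he
        omega
      · have hke : k + 2 = l.length - 1 := by omega
        have h2 : l[k]'(by omega) = l[0]'(by omega) :=
          (he.trans (getElem_idx_congr hke (by omega))).trans h0.symm
        have hkk := hinj k 0 (by omega) (by omega) h2
        omega
    · have hc := chainGet hch (i := k) (by omega)
      rw [hvi] at hc
      exact DG.semiAdj_symm hc
    · have hc := chainGet hch (i := k + 1) (by omega)
      rw [hvi] at hc
      exact hc

end Helpers


section BaseCase

lemma sp_two {D : DG} {v b : ℕ} (h : SP D v b) (hne : v ≠ b) :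
    ∃ x t, D.IsSemipath (v :: x :: t) ∧ (v :: x :: t).getLast? = some b := by
  rcases h with ⟨l, hl, hh, hg⟩
  rcases l with _ | ⟨u, l'⟩
  · exact absurd rfl hl.1
  · have : u = v := by simpa using hh
    subst this
    rcases l' with _ | ⟨x, t⟩
    · exact absurd (by simpa using hg) hne
    · exact ⟨x, t, hl, hg⟩

lemma adj_edge {D : DG} {u w : ℕ} (h : D.semiAdj u w) :
    ∃ g ∈ D.edges, g = (u, w) ∨ g = (w, u) := by
  rcases h with h | h
  · exact ⟨(u, w), h, Or.inl rfl⟩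
  · exact ⟨(w, u), h, Or.inr rfl⟩

lemma edge_eq_absurd {g : ℕ × ℕ} {u x y : ℕ} (h1 : g = (u, x) ∨ g = (x, u))
    (h2 : g = (x, y) ∨ g = (y, x)) (hux : u ≠ x) (huy : u ≠ y) (hxy : x ≠ y) :
    False := by
  rcases h1 with rfl | rfl <;> rcases h2 with h | h <;>
    simp [Prod.ext_iff] at h <;> tauto

lemma not_inner_cases {D : DG} {v : ℕ} (hni : ¬ D.isInner v) (hv : v ∈ D.verts) :
    (∀ x, (x, v) ∉ D.edges) ∨ (∀ x, (v, x) ∉ D.edges) := by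
  by_contra hcon
  push_neg at hcon
  obtain ⟨⟨x, hx⟩, ⟨y, hy⟩⟩ := hcon
  exact hni ⟨hv, ⟨x, hx⟩, ⟨y, hy⟩⟩

lemma unique_edge {D : DG} (hQ : IsQGraph D) {v : ℕ} (hv : v ∈ D.verts)
    (hni : ¬ D.isInner v) :
    ∃ e, e ∈ D.edges ∧ (e.1 = v ∨ e.2 = v) ∧
      ∀ f ∈ D.edges, (f.1 = v ∨ f.2 = v) → f = e := by
  obtain ⟨hor, hconn, hasem, hwef, b, hb⟩ := hQ
  have hvb : v ≠ b := fun h => hni (h ▸ hb)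
  obtain ⟨x, t, hl, _⟩ := sp_two (hconn v hv b hb.1) hvb
  have hadj : D.semiAdj v x := by
    have hc := hl.2.2.2; rw [List.Chain', List.isChain_cons_cons] at hc; exact hc.1
  rcases not_inner_cases hni hv with hno | hno
  · have hout : (v, x) ∈ D.edges := hadj.resolve_right (hno x)
    have hfw := hwef.1 (v, x) ⟨hout, hv, hno⟩
    refine ⟨(v, x), hout, Or.inl rfl, ?_⟩
    rintro ⟨f1, f2⟩ hf (h1 | h2)
    · cases h1
      have := hfw.2 f2 hf
      simp [this]
    · cases h2
      exact absurd hf (hno f1)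
  · have hin : (x, v) ∈ D.edges := hadj.resolve_left (hno x)
    have hfe := hwef.2 (x, v) ⟨hin, hv, hno⟩
    refine ⟨(x, v), hin, Or.inr rfl, ?_⟩
    rintro ⟨f1, f2⟩ hf (h1 | h2)
    · cases h1
      exact absurd hf (hno f2)
    · cases h2
      have := hfe.2 f1 hf
      simp [this]

section NoInnerEdge

variable {D : DG} (hQ : IsQGraph D)
  (hno2 : ∀ e ∈ D.edges, ¬ (D.isInner e.1 ∧ D.isInner e.2))

include hQ hno2

lemma inner_unique : ∀ a b, D.isInner a → D.isInner b → a = b := by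
  intro a b hia hib
  by_contra hne
  obtain ⟨x, t, hl, hg⟩ := sp_two (hQ.2.1 a hia.1 b hib.1) hne
  have hadj : D.semiAdj a x := by
    have hc := hl.2.2.2; rw [List.Chain', List.isChain_cons_cons] at hc; exact hc.1
  obtain ⟨g1, hg1e, hg1⟩ := adj_edge hadj
  have hxni : ¬ D.isInner x := by
    intro hix
    rcases hg1 with rfl | rfl
    · exact hno2 _ hg1e ⟨hia, hix⟩
    · exact hno2 _ hg1e ⟨hix, hia⟩
  have hxb : x ≠ b := fun h => hxni (h ▸ hib)
  rcases t with _ | ⟨y, t2⟩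
  · exact hxb (by simpa using hg)
  · have hadj2 : D.semiAdj x y := by
      have hc := hl.2.2.2
      rw [List.Chain', List.isChain_cons_cons, List.isChain_cons_cons] at hc
      exact hc.2.1
    obtain ⟨g2, hg2e, hg2⟩ := adj_edge hadj2
    obtain ⟨e, _, _, hu⟩ := unique_edge ⟨hQ.1, hQ.2.1, hQ.2.2.1, hQ.2.2.2.1, hQ.2.2.2.2⟩
      (hl.2.1 x (by simp)) hxni
    have he1 : g1 = e := by
      refine hu g1 hg1e ?_
      rcases hg1 with rfl | rfl
      · exact Or.inr rfl
      · exact Or.inl rfl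
    have he2 : g2 = e := by
      refine hu g2 hg2e ?_
      rcases hg2 with rfl | rfl
      · exact Or.inl rfl
      · exact Or.inr rfl
    have hnd := hl.2.2.1
    simp [List.nodup_cons] at hnd
    exact edge_eq_absurd hg1 (he1.trans he2.symm ▸ hg2) (by tauto) (by tauto) (by tauto)

lemma edge_incident {b : ℕ} (hb : D.isInner b) :
    ∀ e ∈ D.edges, e.1 = b ∨ e.2 = b := by
  rintro ⟨u, w⟩ he
  by_cases hiu : D.isInner u
  · exact Or.inl (inner_unique hQ hno2 u b hiu hb)
  by_cases hiw : D.isInner w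
  · exact Or.inr (inner_unique hQ hno2 w b hiw hb)
  exfalso
  have huv : u ∈ D.verts := (hQ.1.1 _ he).1
  have hwv : w ∈ D.verts := (hQ.1.1 _ he).2
  have huw : u ≠ w := hQ.1.2.1 _ he
  obtain ⟨eu, _, _, huu⟩ := unique_edge hQ huv hiu
  obtain ⟨ew, _, _, huw'⟩ := unique_edge hQ hwv hiw
  have heu : (u, w) = eu := huu _ he (Or.inl rfl)
  have hew : (u, w) = ew := huw' _ he (Or.inr rfl)
  have hub : u ≠ b := fun h => hiu (h ▸ hb)
  obtain ⟨x, t, hl, hg⟩ := sp_two (hQ.2.1 u huv b hb.1) hub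
  have hadj : D.semiAdj u x := by
    have hc := hl.2.2.2; rw [List.Chain', List.isChain_cons_cons] at hc; exact hc.1
  obtain ⟨g1, hg1e, hg1⟩ := adj_edge hadj
  have hg1u : g1 = eu := by
    refine huu g1 hg1e ?_
    rcases hg1 with rfl | rfl
    · exact Or.inl rfl
    · exact Or.inr rfl
  have hxw : x = w := by
    rcases hg1 with rfl | rfl
    · have h2 := hg1u.trans heu.symm
      simp [Prod.ext_iff] at h2
      exact h2
    · have h2 := hg1u.trans heu.symm
      simp [Prod.ext_iff] at h2
      exact absurd h2.2 huw
  subst hxw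
  have hwb : x ≠ b := fun h => hiw (h ▸ hb)
  rcases t with _ | ⟨y, t2⟩
  · exact hwb (by simpa using hg)
  · have hadj2 : D.semiAdj x y := by
      have hc := hl.2.2.2
      rw [List.Chain', List.isChain_cons_cons, List.isChain_cons_cons] at hc
      exact hc.2.1
    obtain ⟨g2, hg2e, hg2⟩ := adj_edge hadj2
    have hg2w : g2 = ew := by
      refine huw' g2 hg2e ?_
      rcases hg2 with rfl | rfl
      · exact Or.inl rfl
      · exact Or.inr rfl
    have hnd := hl.2.2.1
    simp [List.nodup_cons] at hnd
    have hg2he : g2 = (u, x) := hg2w.trans (hew.symm)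
    rcases hg2 with rfl | h
    · simp [Prod.ext_iff] at hg2he
      tauto
    · rw [h] at hg2he
      simp [Prod.ext_iff] at hg2he
      tauto

lemma vert_adjacent {b : ℕ} (hb : D.isInner b) :
    ∀ v ∈ D.verts, v = b ∨ (v, b) ∈ D.edges ∨ (b, v) ∈ D.edges := by
  intro v hv
  by_cases hvb : v = b
  · exact Or.inl hvb
  right
  have hni : ¬ D.isInner v := fun h => hvb (inner_unique hQ hno2 v b h hb)
  obtain ⟨e, hee, hei, hu⟩ := unique_edge hQ hv hni
  obtain ⟨x, t, hl, hg⟩ := sp_two (hQ.2.1 v hv b hb.1) hvb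
  have hadj : D.semiAdj v x := by
    have hc := hl.2.2.2; rw [List.Chain', List.isChain_cons_cons] at hc; exact hc.1
  obtain ⟨g1, hg1e, hg1⟩ := adj_edge hadj
  by_cases hxb : x = b
  · subst hxb
    rcases hg1 with rfl | rfl
    · exact Or.inl hg1e
    · exact Or.inr hg1e
  exfalso
  have hxni : ¬ D.isInner x := fun h => hxb (inner_unique hQ hno2 x b h hb)
  obtain ⟨ex, _, _, hux⟩ := unique_edge hQ (hl.2.1 x (by simp)) hxni
  rcases t with _ | ⟨y, t2⟩
  · exact hxb (by simpa using hg)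
  · have hadj2 : D.semiAdj x y := by
      have hc := hl.2.2.2
      rw [List.Chain', List.isChain_cons_cons, List.isChain_cons_cons] at hc
      exact hc.2.1
    obtain ⟨g2, hg2e, hg2⟩ := adj_edge hadj2
    have he1 : g1 = ex := by
      refine hux g1 hg1e ?_
      rcases hg1 with rfl | rfl
      · exact Or.inr rfl
      · exact Or.inl rfl
    have he2 : g2 = ex := by
      refine hux g2 hg2e ?_
      rcases hg2 with rfl | rfl
      · exact Or.inl rfl
      · exact Or.inr rfl
    have hnd := hl.2.2.1
    simp [List.nodup_cons] at hnd
    exact edge_eq_absurd hg1 (he1.trans he2.symm ▸ hg2) (by tauto) (by tauto) (by tauto)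

end NoInnerEdge

lemma base_construct {D : DG} (hQ : IsQGraph D)
    (hno2 : ∀ e ∈ D.edges, ¬ (D.isInner e.1 ∧ D.isInner e.2))
    (X : XDir) (d : ℕ × ℕ) (hd : D.isXEdge X d) :
    ∃ G : CTree, IsConstructionQ G ∧ G.rootGraph = D ∧
      G.dist YDir.N X = d ∧ G.dist YDir.S X = d := by
  obtain ⟨b, hb⟩ := hQ.2.2.2.2
  obtain ⟨a0, ha0⟩ := hb.2.1
  obtain ⟨c0, hc0⟩ := hb.2.2
  cases X with
  | W =>
    obtain ⟨hde, hdw⟩ := hd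
    have hd2 : d.2 = b := by
      rcases edge_incident hQ hno2 hb _ hde with h | h
      · exfalso
        obtain ⟨z, hz⟩ := hb.2.1
        exact hdw.2 z (by rw [h]; exact hz)
      · exact h
    refine ⟨CTree.leaf D (fun _ X' => match X' with | XDir.W => d | XDir.E => (b, c0)),
      IsConstructionQ.leaf _ _ ?_, rfl, rfl, rfl⟩
    exact ⟨hQ.1, b, hb.1, edge_incident hQ hno2 hb, vert_adjacent hQ hno2 hb,
      ⟨a0, ha0⟩, ⟨c0, hc0⟩, fun Y => ⟨hde, hd2, hc0, rfl⟩⟩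
  | E =>
    obtain ⟨hde, hdw⟩ := hd
    have hd1 : d.1 = b := by
      rcases edge_incident hQ hno2 hb _ hde with h | h
      · exact h
      · exfalso
        obtain ⟨z, hz⟩ := hb.2.2
        exact hdw.2 z (by rw [h]; exact hz)
    refine ⟨CTree.leaf D (fun _ X' => match X' with | XDir.W => (a0, b) | XDir.E => d),
      IsConstructionQ.leaf _ _ ?_, rfl, rfl, rfl⟩
    exact ⟨hQ.1, b, hb.1, edge_incident hQ hno2 hb, vert_adjacent hQ hno2 hb,
      ⟨a0, ha0⟩, ⟨c0, hc0⟩, fun Y => ⟨ha0, rfl, hde, hd1⟩⟩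

end BaseCase


section CutCase

attribute [local instance] Classical.propDecidable

lemma nodup_idx' {l : List ℕ} (hnd : l.Nodup) {i j : ℕ} (hi : i < l.length)
    (hj : j < l.length) (h : l[i] = l[j]) : i = j :=
  (hnd.getElem_inj_iff).1 h

lemma getLast?_mem {l : List ℕ} {v : ℕ} (h : l.getLast? = some v) : v ∈ l := by
  obtain ⟨h0, e⟩ := getLast?_getElem h
  exact e ▸ List.getElem_mem _

/-- `D` with the edge `(a,c)` erased. -/
def Derase (D : DG) (a c : ℕ) : DG := ⟨D.verts, D.edges.erase (a, c)⟩

/-- The component of `a` after erasing `(a,c)`. -/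
noncomputable def cW (D : DG) (a c : ℕ) : Finset ℕ :=
  D.verts.filter (fun v => SP (Derase D a c) a v)

/-- The complement component. -/
noncomputable def cE (D : DG) (a c : ℕ) : Finset ℕ := D.verts \ cW D a c

def frb (D : DG) : ℕ := D.verts.sup id + 1
def frc (D : DG) : ℕ := D.verts.sup id + 2

noncomputable def fWs (D : DG) (a c : ℕ) : Finset (ℕ × ℕ) :=
  D.edges.filter (fun e => e.1 ∈ cW D a c ∧ e.2 ∈ cW D a c)
noncomputable def fEs (D : DG) (a c : ℕ) : Finset (ℕ × ℕ) :=
  D.edges.filter (fun e => e.1 ∈ cE D a c ∧ e.2 ∈ cE D a c)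

noncomputable def DW (D : DG) (a c : ℕ) : DG :=
  ⟨insert (frb D) (cW D a c), insert (a, frb D) (fWs D a c)⟩
noncomputable def DE (D : DG) (a c : ℕ) : DG :=
  ⟨insert (frc D) (cE D a c), insert (frc D, c) (fEs D a c)⟩

lemma frb_not_mem (D : DG) : frb D ∉ D.verts := by
  intro h
  have h2 : id (frb D) ≤ D.verts.sup id := Finset.le_sup h
  simp only [id, frb] at h2
  omega

lemma frc_not_mem (D : DG) : frc D ∉ D.verts := by
  intro h
  have h2 : id (frc D) ≤ D.verts.sup id := Finset.le_sup h
  simp only [id, frc] at h2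
  omega

lemma frb_ne_frc (D : DG) : frb D ≠ frc D := by simp [frb, frc]

lemma semiAdj_erase {D : DG} {a c x y : ℕ} (h : (Derase D a c).semiAdj x y) :
    D.semiAdj x y := by
  rcases h with h | h
  · exact Or.inl (Finset.mem_of_mem_erase h)
  · exact Or.inr (Finset.mem_of_mem_erase h)

lemma semiAdj_to_erase {D : DG} {a c x y : ℕ} (h : D.semiAdj x y) (hx : x ≠ a)
    (hy : y ≠ a) : (Derase D a c).semiAdj x y := by
  rcases h with h | h
  · exact Or.inl (Finset.mem_erase.2 ⟨fun he => hx (congrArg Prod.fst he), h⟩)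
  · exact Or.inr (Finset.mem_erase.2 ⟨fun he => hy (congrArg Prod.fst he), h⟩)

lemma mem_cW {D : DG} {a c v : ℕ} :
    v ∈ cW D a c ↔ v ∈ D.verts ∧ SP (Derase D a c) a v := Finset.mem_filter

lemma a_mem_cW {D : DG} {a c : ℕ} (haV : a ∈ D.verts) : a ∈ cW D a c :=
  mem_cW.2 ⟨haV, sp_refl (by exact haV)⟩

lemma sp_mem_cW {D : DG} {a c : ℕ} {l : List ℕ} {x : ℕ}
    (hl : (Derase D a c).IsSemipath l) (hh : l.head? = some a) (hx : x ∈ l) :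
    x ∈ cW D a c :=
  mem_cW.2 ⟨hl.2.1 x hx, sp_of_mem hl hh hx⟩

lemma cW_closed {D : DG} {a c v x : ℕ} (hor : D.IsOriented) (hv : v ∈ cW D a c)
    (hadj : (Derase D a c).semiAdj v x) : x ∈ cW D a c := by
  have hxv : x ∈ D.verts := by
    rcases hadj with h | h
    · exact (hor.1 _ (Finset.mem_of_mem_erase h)).2
    · exact (hor.1 _ (Finset.mem_of_mem_erase h)).1
  obtain ⟨hvv, hsp⟩ := mem_cW.1 hv
  exact mem_cW.2 ⟨hxv, sp_step hsp hadj hxv⟩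

lemma a_ne_c {D : DG} {a c : ℕ} (hor : D.IsOriented) (hac : (a, c) ∈ D.edges) :
    a ≠ c := hor.2.1 _ hac

lemma c_not_cW {D : DG} {a c : ℕ} (hor : D.IsOriented) (hasem : D.Asemicyclic)
    (hac : (a, c) ∈ D.edges) : c ∉ cW D a c := by
  intro hmem
  obtain ⟨_, hsp⟩ := mem_cW.1 hmem
  have hne : a ≠ c := a_ne_c hor hac
  obtain ⟨x, t, hl, hg⟩ := sp_two hsp hne
  have hadjac : ¬ (Derase D a c).semiAdj a c := by
    rintro (h | h)
    · exact Finset.notMem_erase _ _ h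
    · exact hor.2.2.1 a c hac (Finset.mem_of_mem_erase h)
  rcases t with _ | ⟨y, t2⟩
  · refine hadjac ?_
    have hxc : x = c := by simpa using hg
    subst hxc
    have hc2 := hl.2.2.2
    rw [List.Chain', List.isChain_cons_cons] at hc2
    exact hc2.1
  · -- build a semicycle (a :: x :: y :: t2) ++ [a]
    refine hasem ((a :: x :: y :: t2) ++ [a]) ⟨by simp, ?_, ?_, ?_, ?_⟩
    · intro z hz
      rcases List.mem_append.1 hz with hz | hz
      · exact hl.2.1 z hz
      · simp at hz; subst hz; exact (hor.1 _ hac).1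
    · rw [List.head?_append, List.getLast?_append]
      simp
    · rw [List.dropLast_concat]
      exact hl.2.2.1
    · rw [List.Chain', List.isChain_append]
      refine ⟨chain'_imp_mem hl.2.2.2 (fun p _ q _ h => semiAdj_erase h), by simp, ?_⟩
      intro p hp q hq
      rw [hg] at hp
      simp at hp hq
      subst hp; subst hq
      exact Or.inr hac

lemma mem_cE {D : DG} {a c v : ℕ} :
    v ∈ cE D a c ↔ v ∈ D.verts ∧ v ∉ cW D a c := Finset.mem_sdiff

lemma cover {D : DG} {a c v : ℕ} (hQ : IsQGraph D) (hac : (a, c) ∈ D.edges)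
    (hv : v ∈ D.verts) (hnw : v ∉ cW D a c) : SP (Derase D a c) c v := by
  have haV : a ∈ D.verts := (hQ.1.1 _ hac).1
  have hva : v ≠ a := fun h => hnw (by rw [h]; exact a_mem_cW haV)
  obtain ⟨x, t, hl, hg⟩ := sp_two (hQ.2.1 a haV v hv) (Ne.symm hva)
  -- hl : D.IsSemipath (a :: x :: t), getLast? = some v
  have hanr : a ∉ x :: t := by
    have hnd := hl.2.2.1
    rw [List.nodup_cons] at hnd
    exact hnd.1
  by_cases hxc : x = c
  · have hrest : (Derase D a c).IsSemipath (x :: t) := by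
      refine ⟨by simp, fun z hz => hl.2.1 z (List.mem_cons_of_mem _ hz),
        hl.2.2.1.of_cons, ?_⟩
      refine chain'_imp_mem hl.2.2.2.tail fun z hz w hw h => ?_
      exact semiAdj_to_erase h (fun he => hanr (he ▸ hz)) (fun he => hanr (he ▸ hw))
    refine ⟨x :: t, hrest, by simp [hxc], ?_⟩
    rw [← hg]
    exact (getLast?_cons_ne (by simp)).symm
  · exfalso
    apply hnw
    have hsp : (Derase D a c).IsSemipath (a :: x :: t) := by
      refine ⟨by simp, hl.2.1, hl.2.2.1, ?_⟩
      refine chain_ofGet fun i hi => ?_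
      have hstep := chainGet hl.2.2.2 hi
      have hnd := hl.2.2.1
      rcases hstep with h | h
      · refine Or.inl (Finset.mem_erase.2 ⟨?_, h⟩)
        intro he
        have h1 : (a :: x :: t)[i] = a := congrArg Prod.fst he
        have h0 : (a :: x :: t)[0]'(by simp) = a := rfl
        have hieq : i = 0 := nodup_idx' hnd (by omega) (by simp) (h1.trans h0.symm)
        subst hieq
        have h2 : (a :: x :: t)[1]'(by simp) = c := congrArg Prod.snd he
        exact hxc (by simpa using h2)
      · refine Or.inr (Finset.mem_erase.2 ⟨?_, h⟩)
        intro he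
        have h1 : (a :: x :: t)[i+1] = a := congrArg Prod.fst he
        have h0 : (a :: x :: t)[0]'(by simp) = a := rfl
        have : i + 1 = 0 := nodup_idx' hnd (by omega) (by simp) (h1.trans h0.symm)
        omega
    exact sp_mem_cW hsp (by simp) (getLast?_mem hg)

lemma DG.ext' {D1 D2 : DG} (h1 : D1.verts = D2.verts) (h2 : D1.edges = D2.edges) :
    D1 = D2 := by
  cases D1; cases D2; simp_all

lemma mem_fWs {D : DG} {a c : ℕ} {e : ℕ × ℕ} :
    e ∈ fWs D a c ↔ e ∈ D.edges ∧ e.1 ∈ cW D a c ∧ e.2 ∈ cW D a c := Finset.mem_filter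

lemma mem_fEs {D : DG} {a c : ℕ} {e : ℕ × ℕ} :
    e ∈ fEs D a c ↔ e ∈ D.edges ∧ e.1 ∈ cE D a c ∧ e.2 ∈ cE D a c := Finset.mem_filter

lemma cW_sub_verts {D : DG} {a c : ℕ} : cW D a c ⊆ D.verts := Finset.filter_subset _ _

lemma cE_sub_verts {D : DG} {a c : ℕ} : cE D a c ⊆ D.verts := Finset.sdiff_subset

lemma frb_not_cW {D : DG} {a c : ℕ} : frb D ∉ cW D a c :=
  fun h => frb_not_mem D (cW_sub_verts h)

lemma frc_not_cE {D : DG} {a c : ℕ} : frc D ∉ cE D a c :=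
  fun h => frc_not_mem D (cE_sub_verts h)

lemma cE_closed {D : DG} {a c v x : ℕ} (hor : D.IsOriented) (hv : v ∈ cE D a c)
    (hadj : (Derase D a c).semiAdj v x) : x ∈ cE D a c := by
  have hxv : x ∈ D.verts := by
    rcases hadj with h | h
    · exact (hor.1 _ (Finset.mem_of_mem_erase h)).2
    · exact (hor.1 _ (Finset.mem_of_mem_erase h)).1
  refine mem_cE.2 ⟨hxv, fun hxw => (mem_cE.1 hv).2 (cW_closed hor hxw hadj.symm)⟩

lemma edge_in_fW {D : DG} {a c : ℕ} {e : ℕ × ℕ} (hor : D.IsOriented)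
    (he : e ∈ D.edges) (hne : e ≠ (a, c)) (h1 : e.1 ∈ cW D a c ∨ e.2 ∈ cW D a c) :
    e ∈ fWs D a c := by
  have hadj : (Derase D a c).semiAdj e.1 e.2 := Or.inl (Finset.mem_erase.2 ⟨hne, he⟩)
  rcases h1 with h1 | h1
  · exact mem_fWs.2 ⟨he, h1, cW_closed hor h1 hadj⟩
  · exact mem_fWs.2 ⟨he, cW_closed hor h1 hadj.symm, h1⟩

lemma edge_in_fE {D : DG} {a c : ℕ} {e : ℕ × ℕ} (hor : D.IsOriented)
    (he : e ∈ D.edges) (hne : e ≠ (a, c)) (h1 : e.1 ∈ cE D a c ∨ e.2 ∈ cE D a c) :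
    e ∈ fEs D a c := by
  have hadj : (Derase D a c).semiAdj e.1 e.2 := Or.inl (Finset.mem_erase.2 ⟨hne, he⟩)
  rcases h1 with h1 | h1
  · exact mem_fEs.2 ⟨he, h1, cE_closed hor h1 hadj⟩
  · exact mem_fEs.2 ⟨he, cE_closed hor h1 hadj.symm, h1⟩

lemma edge_side {D : DG} {a c : ℕ} {e : ℕ × ℕ} (hor : D.IsOriented)
    (he : e ∈ D.edges) (hne : e ≠ (a, c)) : e ∈ fWs D a c ∨ e ∈ fEs D a c := by
  by_cases h1 : e.1 ∈ cW D a c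
  · exact Or.inl (edge_in_fW hor he hne (Or.inl h1))
  · exact Or.inr (edge_in_fE hor he hne (Or.inl (mem_cE.2 ⟨(hor.1 _ he).1, h1⟩)))

lemma mem_DW_edges {D : DG} {a c : ℕ} {e : ℕ × ℕ} :
    e ∈ (DW D a c).edges ↔ e = (a, frb D) ∨ e ∈ fWs D a c := Finset.mem_insert

lemma mem_DE_edges {D : DG} {a c : ℕ} {e : ℕ × ℕ} :
    e ∈ (DE D a c).edges ↔ e = (frc D, c) ∨ e ∈ fEs D a c := Finset.mem_insert

lemma fWs_not_frb {D : DG} {a c : ℕ} {e : ℕ × ℕ} (he : e ∈ fWs D a c) :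
    e.1 ≠ frb D ∧ e.2 ≠ frb D :=
  ⟨fun h => frb_not_cW (h ▸ (mem_fWs.1 he).2.1), fun h => frb_not_cW (h ▸ (mem_fWs.1 he).2.2)⟩

lemma fEs_not_frc {D : DG} {a c : ℕ} {e : ℕ × ℕ} (he : e ∈ fEs D a c) :
    e.1 ≠ frc D ∧ e.2 ≠ frc D :=
  ⟨fun h => frc_not_cE (h ▸ (mem_fEs.1 he).2.1), fun h => frc_not_cE (h ▸ (mem_fEs.1 he).2.2)⟩

lemma bp_no_out {D : DG} {a c : ℕ} (haV : a ∈ D.verts) :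
    ∀ z, (frb D, z) ∉ (DW D a c).edges := by
  intro z h
  rcases mem_DW_edges.1 h with h | h
  · have h2 : frb D = a := congrArg Prod.fst h
    exact frb_not_mem D (by rw [h2]; exact haV)
  · exact (fWs_not_frb h).1 rfl

lemma bp_in_only {D : DG} {a c : ℕ} :
    ∀ x, (x, frb D) ∈ (DW D a c).edges → x = a := by
  intro x h
  rcases mem_DW_edges.1 h with h | h
  · exact congrArg Prod.fst h
  · exact absurd rfl (fWs_not_frb h).2

lemma cp_no_in {D : DG} {a c : ℕ} (hcV : c ∈ D.verts) :
    ∀ x, (x, frc D) ∉ (DE D a c).edges := by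
  intro x h
  rcases mem_DE_edges.1 h with h | h
  · have h2 : frc D = c := congrArg Prod.snd h
    exact frc_not_mem D (by rw [h2]; exact hcV)
  · exact (fEs_not_frc h).2 rfl

lemma cp_out_only {D : DG} {a c : ℕ} :
    ∀ z, (frc D, z) ∈ (DE D a c).edges → z = c := by
  intro z h
  rcases mem_DE_edges.1 h with h | h
  · exact congrArg Prod.snd h
  · exact absurd rfl (fEs_not_frc h).1

lemma DW_in_iff {D : DG} {a c v x : ℕ} (hor : D.IsOriented) (hasem : D.Asemicyclic)
    (hac : (a, c) ∈ D.edges) (hv : v ∈ cW D a c) :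
    ((x, v) ∈ (DW D a c).edges ↔ (x, v) ∈ D.edges) := by
  constructor
  · intro h
    rcases mem_DW_edges.1 h with h | h
    · exfalso
      have h2 : v = frb D := congrArg Prod.snd h
      rw [h2] at hv
      exact frb_not_cW hv
    · exact (mem_fWs.1 h).1
  · intro h
    refine mem_DW_edges.2 (Or.inr (edge_in_fW hor h ?_ (Or.inr hv)))
    intro he
    have h2 : v = c := congrArg Prod.snd he
    rw [h2] at hv
    exact c_not_cW hor hasem hac hv

lemma DW_out_iff {D : DG} {a c v z : ℕ} (hor : D.IsOriented) (hv : v ∈ cW D a c)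
    (hva : v ≠ a) : ((v, z) ∈ (DW D a c).edges ↔ (v, z) ∈ D.edges) := by
  constructor
  · intro h
    rcases mem_DW_edges.1 h with h | h
    · exact absurd (congrArg Prod.fst h : v = a) hva
    · exact (mem_fWs.1 h).1
  · intro h
    refine mem_DW_edges.2 (Or.inr (edge_in_fW hor h ?_ (Or.inl hv)))
    intro he
    exact hva (congrArg Prod.fst he)

lemma DE_out_iff {D : DG} {a c v z : ℕ} (hor : D.IsOriented) (hv : v ∈ cE D a c)
    (haW : a ∈ cW D a c) : ((v, z) ∈ (DE D a c).edges ↔ (v, z) ∈ D.edges) := by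
  constructor
  · intro h
    rcases mem_DE_edges.1 h with h | h
    · exfalso
      have h2 : v = frc D := congrArg Prod.fst h
      rw [h2] at hv
      exact frc_not_cE hv
    · exact (mem_fEs.1 h).1
  · intro h
    refine mem_DE_edges.2 (Or.inr (edge_in_fE hor h ?_ (Or.inl hv)))
    intro he
    have h2 : v = a := congrArg Prod.fst he
    rw [h2] at hv
    exact (mem_cE.1 hv).2 haW

lemma DE_in_iff {D : DG} {a c v x : ℕ} (hor : D.IsOriented) (hv : v ∈ cE D a c)
    (hvc : v ≠ c) : ((x, v) ∈ (DE D a c).edges ↔ (x, v) ∈ D.edges) := by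
  constructor
  · intro h
    rcases mem_DE_edges.1 h with h | h
    · exact absurd (congrArg Prod.snd h : v = c) hvc
    · exact (mem_fEs.1 h).1
  · intro h
    refine mem_DE_edges.2 (Or.inr (edge_in_fE hor h ?_ (Or.inr hv)))
    intro he
    exact hvc (congrArg Prod.snd he)

lemma a_inner_DW {D : DG} {a c : ℕ} (hQ : IsQGraph D) (hac : (a, c) ∈ D.edges)
    (ha : D.isInner a) : (DW D a c).isInner a := by
  have haV : a ∈ D.verts := ha.1
  obtain ⟨x, hx⟩ := ha.2.1
  refine ⟨Finset.mem_insert_of_mem (a_mem_cW haV), ⟨x, ?_⟩, ⟨frb D, Finset.mem_insert_self _ _⟩⟩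
  exact (DW_in_iff hQ.1 hQ.2.2.1 hac (a_mem_cW haV)).2 hx

lemma c_inner_DE {D : DG} {a c : ℕ} (hQ : IsQGraph D) (hac : (a, c) ∈ D.edges)
    (hc : D.isInner c) : (DE D a c).isInner c := by
  have hcE : c ∈ cE D a c := mem_cE.2 ⟨hc.1, c_not_cW hQ.1 hQ.2.2.1 hac⟩
  obtain ⟨z, hz⟩ := hc.2.2
  refine ⟨Finset.mem_insert_of_mem hcE, ⟨frc D, Finset.mem_insert_self _ _⟩, ⟨z, ?_⟩⟩
  exact (DE_out_iff hQ.1 hcE (a_mem_cW (hQ.1.1 _ hac).1)).2 hz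

lemma DW_oriented {D : DG} {a c : ℕ} (hor : D.IsOriented) (haV : a ∈ D.verts) :
    (DW D a c).IsOriented := by
  refine ⟨?_, ?_, ?_, ?_⟩
  · rintro e he
    rcases mem_DW_edges.1 he with rfl | he
    · exact ⟨Finset.mem_insert_of_mem (a_mem_cW haV), Finset.mem_insert_self _ _⟩
    · exact ⟨Finset.mem_insert_of_mem (mem_fWs.1 he).2.1,
        Finset.mem_insert_of_mem (mem_fWs.1 he).2.2⟩
  · rintro e he
    rcases mem_DW_edges.1 he with rfl | he
    · intro h
      have h2 : a = frb D := h
      exact frb_not_mem D (by rw [← h2]; exact haV)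
    · exact hor.2.1 _ (mem_fWs.1 he).1
  · rintro x y h1 h2
    rcases mem_DW_edges.1 h1 with h1 | h1 <;> rcases mem_DW_edges.1 h2 with h2 | h2
    · have e1 : x = a := congrArg Prod.fst h1
      have e2 : y = a := congrArg Prod.fst h2
      have e3 : y = frb D := congrArg Prod.snd h1
      exact frb_not_mem D ((e3.symm.trans e2) ▸ haV)
    · exact (fWs_not_frb h2).1 (congrArg Prod.snd h1)
    · exact (fWs_not_frb h1).1 (congrArg Prod.snd h2)
    · exact hor.2.2.1 x y (mem_fWs.1 h1).1 (mem_fWs.1 h2).1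
  · exact ⟨frb D, Finset.mem_insert_self _ _⟩

lemma DE_oriented {D : DG} {a c : ℕ} (hor : D.IsOriented) (hcV : c ∈ D.verts)
    (hcE : c ∈ cE D a c) : (DE D a c).IsOriented := by
  refine ⟨?_, ?_, ?_, ?_⟩
  · rintro e he
    rcases mem_DE_edges.1 he with rfl | he
    · exact ⟨Finset.mem_insert_self _ _, Finset.mem_insert_of_mem hcE⟩
    · exact ⟨Finset.mem_insert_of_mem (mem_fEs.1 he).2.1,
        Finset.mem_insert_of_mem (mem_fEs.1 he).2.2⟩
  · rintro e he
    rcases mem_DE_edges.1 he with rfl | he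
    · intro h
      have h2 : frc D = c := h
      exact frc_not_mem D (by rw [h2]; exact hcV)
    · exact hor.2.1 _ (mem_fEs.1 he).1
  · rintro x y h1 h2
    rcases mem_DE_edges.1 h1 with h1 | h1 <;> rcases mem_DE_edges.1 h2 with h2 | h2
    · have e1 : y = c := congrArg Prod.snd h1
      have e2 : y = frc D := congrArg Prod.fst h2
      exact frc_not_mem D ((e2.symm.trans e1) ▸ hcV)
    · exact (fEs_not_frc h2).2 (congrArg Prod.fst h1)
    · exact (fEs_not_frc h1).2 (congrArg Prod.fst h2)
    · exact hor.2.2.1 x y (mem_fEs.1 h1).1 (mem_fEs.1 h2).1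
  · exact ⟨frc D, Finset.mem_insert_self _ _⟩


lemma DW_WEF {D : DG} {a c : ℕ} (hQ : IsQGraph D) (hac : (a, c) ∈ D.edges)
    (ha : D.isInner a) : (DW D a c).WEFunctional := by
  have hor := hQ.1
  have hasem := hQ.2.2.1
  have haV : a ∈ D.verts := ha.1
  have haW : a ∈ cW D a c := a_mem_cW haV
  have ha_in : ∃ x, (x, a) ∈ (DW D a c).edges := by
    obtain ⟨x, hx⟩ := ha.2.1
    exact ⟨x, (DW_in_iff hor hasem hac haW).2 hx⟩
  constructor
  · -- W-edges
    rintro e ⟨heDW, he1⟩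
    have hnea : e.1 ≠ a := by
      rintro h
      obtain ⟨x, hx⟩ := ha_in
      exact he1.2 x (by rw [h]; exact hx)
    have hefW : e ∈ fWs D a c := by
      rcases mem_DW_edges.1 heDW with h | h
      · exact absurd (congrArg Prod.fst h) hnea
      · exact h
    obtain ⟨heD, h1, h2⟩ := mem_fWs.1 hefW
    have hWD : D.isWVert e.1 := by
      refine ⟨cW_sub_verts h1, fun x hx => he1.2 x ?_⟩
      exact (DW_in_iff hor hasem hac h1).2 hx
    have hfw := hQ.2.2.2.1.1 e ⟨heD, hWD⟩
    refine ⟨⟨heDW, he1⟩, fun z hz => ?_⟩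
    exact hfw.2 z ((DW_out_iff hor h1 hnea).1 hz)
  · -- E-edges
    rintro e ⟨heDW, he2⟩
    rcases mem_DW_edges.1 heDW with heq | hefW
    · subst heq
      exact ⟨⟨heDW, he2⟩, fun x hx => bp_in_only x hx⟩
    · obtain ⟨heD, h1, h2⟩ := mem_fWs.1 hefW
      have hnea : e.2 ≠ a := by
        rintro h
        exact he2.2 (frb D) (by rw [h]; exact Finset.mem_insert_self _ _)
      have hED : D.isEVert e.2 := by
        refine ⟨cW_sub_verts h2, fun z hz => he2.2 z ?_⟩
        exact (DW_out_iff hor h2 hnea).2 hz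
      have hfe := hQ.2.2.2.1.2 e ⟨heD, hED⟩
      refine ⟨⟨heDW, he2⟩, fun x hx => ?_⟩
      exact hfe.2 x ((DW_in_iff hor hasem hac h2).1 hx)

lemma DE_WEF {D : DG} {a c : ℕ} (hQ : IsQGraph D) (hac : (a, c) ∈ D.edges)
    (hc : D.isInner c) : (DE D a c).WEFunctional := by
  have hor := hQ.1
  have hasem := hQ.2.2.1
  have hcV : c ∈ D.verts := hc.1
  have haW : a ∈ cW D a c := a_mem_cW (hor.1 _ hac).1
  have hcE : c ∈ cE D a c := mem_cE.2 ⟨hcV, c_not_cW hor hasem hac⟩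
  have hc_out : ∃ z, (c, z) ∈ (DE D a c).edges := by
    obtain ⟨z, hz⟩ := hc.2.2
    exact ⟨z, (DE_out_iff hor hcE haW).2 hz⟩
  constructor
  · -- W-edges
    rintro e ⟨heDE, he1⟩
    rcases mem_DE_edges.1 heDE with heq | hefE
    · subst heq
      exact ⟨⟨heDE, he1⟩, fun z hz => cp_out_only z hz⟩
    · obtain ⟨heD, h1, h2⟩ := mem_fEs.1 hefE
      have hnec : e.1 ≠ c := by
        rintro h
        exact he1.2 (frc D) (by rw [h]; exact Finset.mem_insert_self _ _)
      have hWD : D.isWVert e.1 := by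
        refine ⟨cE_sub_verts h1, fun x hx => he1.2 x ?_⟩
        exact (DE_in_iff hor h1 hnec).2 hx
      have hfw := hQ.2.2.2.1.1 e ⟨heD, hWD⟩
      refine ⟨⟨heDE, he1⟩, fun z hz => ?_⟩
      exact hfw.2 z ((DE_out_iff hor h1 haW).1 hz)
  · -- E-edges
    rintro e ⟨heDE, he2⟩
    have hnec : e.2 ≠ c := by
      rintro h
      obtain ⟨z, hz⟩ := hc_out
      exact he2.2 z (by rw [h]; exact hz)
    have hefE : e ∈ fEs D a c := by
      rcases mem_DE_edges.1 heDE with h | h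
      · exact absurd (congrArg Prod.snd h) hnec
      · exact h
    obtain ⟨heD, h1, h2⟩ := mem_fEs.1 hefE
    have hED : D.isEVert e.2 := by
      refine ⟨cE_sub_verts h2, fun z hz => he2.2 z ?_⟩
      exact (DE_out_iff hor h2 haW).2 hz
    have hfe := hQ.2.2.2.1.2 e ⟨heD, hED⟩
    refine ⟨⟨heDE, he2⟩, fun x hx => ?_⟩
    exact hfe.2 x ((DE_in_iff hor h2 hnec).1 hx)

lemma DW_funcE {D : DG} {a c : ℕ} (haV : a ∈ D.verts) :
    (DW D a c).funcEEdge (a, frb D) :=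
  ⟨⟨Finset.mem_insert_self _ _, ⟨Finset.mem_insert_self _ _, bp_no_out haV⟩⟩,
    fun x hx => bp_in_only x hx⟩

lemma DE_funcW {D : DG} {a c : ℕ} (hcV : c ∈ D.verts) (hcE : c ∈ cE D a c) :
    (DE D a c).funcWEdge (frc D, c) :=
  ⟨⟨Finset.mem_insert_self _ _, ⟨Finset.mem_insert_self _ _, cp_no_in hcV⟩⟩,
    fun z hz => cp_out_only z hz⟩

lemma semiAdj_cW_DW {D : DG} {a c x y : ℕ} (hor : D.IsOriented) (hx : x ∈ cW D a c)
    (hy : y ∈ cW D a c) (h : (Derase D a c).semiAdj x y) : (DW D a c).semiAdj x y := by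
  rcases h with h | h
  · obtain ⟨hne, hD⟩ := Finset.mem_erase.1 h
    exact Or.inl (mem_DW_edges.2 (Or.inr (edge_in_fW hor hD hne (Or.inl hx))))
  · obtain ⟨hne, hD⟩ := Finset.mem_erase.1 h
    exact Or.inr (mem_DW_edges.2 (Or.inr (edge_in_fW hor hD hne (Or.inl hy))))

lemma semiAdj_cE_DE {D : DG} {a c x y : ℕ} (hor : D.IsOriented) (hx : x ∈ cE D a c)
    (hy : y ∈ cE D a c) (h : (Derase D a c).semiAdj x y) : (DE D a c).semiAdj x y := by
  rcases h with h | h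
  · obtain ⟨hne, hD⟩ := Finset.mem_erase.1 h
    exact Or.inl (mem_DE_edges.2 (Or.inr (edge_in_fE hor hD hne (Or.inl hx))))
  · obtain ⟨hne, hD⟩ := Finset.mem_erase.1 h
    exact Or.inr (mem_DE_edges.2 (Or.inr (edge_in_fE hor hD hne (Or.inl hy))))

lemma sp_DW_a {D : DG} {a c : ℕ} (hor : D.IsOriented) (haV : a ∈ D.verts) :
    ∀ v ∈ (DW D a c).verts, SP (DW D a c) a v := by
  intro v hv
  rcases Finset.mem_insert.1 hv with rfl | hv
  · refine ⟨[a, frb D], ⟨by simp, ?_, ?_, ?_⟩, by simp, by simp⟩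
    · intro z hz
      rcases List.mem_cons.1 hz with rfl | hz
      · exact Finset.mem_insert_of_mem (a_mem_cW haV)
      · simp at hz; subst hz; exact Finset.mem_insert_self _ _
    · simp
      intro h
      exact frb_not_mem D (by rw [← h]; exact haV)
    · simp [List.Chain', DG.semiAdj]
      exact Or.inl (Finset.mem_insert_self _ _)
  · obtain ⟨hvv, l, hl, hh, hg⟩ := mem_cW.1 hv
    refine ⟨l, ⟨hl.1, ?_, hl.2.2.1, ?_⟩, hh, hg⟩
    · exact fun x hx => Finset.mem_insert_of_mem (sp_mem_cW hl hh hx)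
    · exact chain'_imp_mem hl.2.2.2 fun x hx y hy h =>
        semiAdj_cW_DW hor (sp_mem_cW hl hh hx) (sp_mem_cW hl hh hy) h

lemma sp_mem_cE {D : DG} {a c : ℕ} {l : List ℕ} {x : ℕ} (hor : D.IsOriented)
    (hasem : D.Asemicyclic) (hac : (a, c) ∈ D.edges)
    (hl : (Derase D a c).IsSemipath l) (hh : l.head? = some c) (hx : x ∈ l) :
    x ∈ cE D a c := by
  refine mem_cE.2 ⟨hl.2.1 x hx, fun hxw => ?_⟩
  have h1 : SP (Derase D a c) c x := sp_of_mem hl hh hx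
  have h2 : SP (Derase D a c) a x := (mem_cW.1 hxw).2
  exact c_not_cW hor hasem hac (mem_cW.2 ⟨(hor.1 _ hac).2, sp_trans h2 (sp_reverse h1)⟩)

lemma sp_DE_c {D : DG} {a c : ℕ} (hQ : IsQGraph D) (hac : (a, c) ∈ D.edges) :
    ∀ v ∈ (DE D a c).verts, SP (DE D a c) c v := by
  have hor := hQ.1
  have hasem := hQ.2.2.1
  have hcV : c ∈ D.verts := (hor.1 _ hac).2
  have hcE : c ∈ cE D a c := mem_cE.2 ⟨hcV, c_not_cW hor hasem hac⟩
  intro v hv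
  rcases Finset.mem_insert.1 hv with rfl | hv
  · refine ⟨[c, frc D], ⟨by simp, ?_, ?_, ?_⟩, by simp, by simp⟩
    · intro z hz
      rcases List.mem_cons.1 hz with rfl | hz
      · exact Finset.mem_insert_of_mem hcE
      · simp at hz; subst hz; exact Finset.mem_insert_self _ _
    · simp
      intro h
      exact frc_not_mem D (by rw [← h]; exact hcV)
    · simp [List.Chain', DG.semiAdj]
      exact Or.inr (Finset.mem_insert_self _ _)
  · obtain ⟨hvv, hnw⟩ := mem_cE.1 hv
    obtain ⟨l, hl, hh, hg⟩ := cover hQ hac hvv hnw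
    refine ⟨l, ⟨hl.1, ?_, hl.2.2.1, ?_⟩, hh, hg⟩
    · exact fun x hx => Finset.mem_insert_of_mem (sp_mem_cE hor hasem hac hl hh hx)
    · exact chain'_imp_mem hl.2.2.2 fun x hx y hy h =>
        semiAdj_cE_DE hor (sp_mem_cE hor hasem hac hl hh hx)
          (sp_mem_cE hor hasem hac hl hh hy) h

lemma DW_conn {D : DG} {a c : ℕ} (hor : D.IsOriented) (haV : a ∈ D.verts) :
    (DW D a c).WeaklyConnected := by
  intro v hv w hw
  exact sp_trans (sp_reverse (sp_DW_a hor haV v hv)) (sp_DW_a hor haV w hw)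

lemma DE_conn {D : DG} {a c : ℕ} (hQ : IsQGraph D) (hac : (a, c) ∈ D.edges) :
    (DE D a c).WeaklyConnected := by
  intro v hv w hw
  exact sp_trans (sp_reverse (sp_DE_c hQ hac v hv)) (sp_DE_c hQ hac w hw)

lemma DW_asem {D : DG} {a c : ℕ} (hor : D.IsOriented) (hasem : D.Asemicyclic)
    (haV : a ∈ D.verts) : (DW D a c).Asemicyclic := by
  intro l hcyc
  by_cases hb : frb D ∈ l
  · obtain ⟨x, y, hxy, hx, hy⟩ := two_nbrs hcyc hb
    have hxa : x = a := by
      rcases hx with h | h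
      · exact absurd h (bp_no_out haV _)
      · exact bp_in_only x h
    have hya : y = a := by
      rcases hy with h | h
      · exact absurd h (bp_no_out haV _)
      · exact bp_in_only y h
    exact hxy (hxa.trans hya.symm)
  · refine hasem l ⟨hcyc.1, ?_, hcyc.2.2.1, hcyc.2.2.2.1, ?_⟩
    · intro x hx
      rcases Finset.mem_insert.1 (hcyc.2.1 x hx) with rfl | h
      · exact absurd hx hb
      · exact cW_sub_verts h
    · refine chain'_imp_mem hcyc.2.2.2.2 fun x hx y hy h => ?_
      rcases h with h | h
      · rcases mem_DW_edges.1 h with heq | hfw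
        · exfalso
          have h2 : y = frb D := congrArg Prod.snd heq
          rw [h2] at hy
          exact hb hy
        · exact Or.inl (mem_fWs.1 hfw).1
      · rcases mem_DW_edges.1 h with heq | hfw
        · exfalso
          have h2 : x = frb D := congrArg Prod.snd heq
          rw [h2] at hx
          exact hb hx
        · exact Or.inr (mem_fWs.1 hfw).1

lemma DE_asem {D : DG} {a c : ℕ} (hor : D.IsOriented) (hasem : D.Asemicyclic)
    (hcV : c ∈ D.verts) : (DE D a c).Asemicyclic := by
  intro l hcyc
  by_cases hb : frc D ∈ l
  · obtain ⟨x, y, hxy, hx, hy⟩ := two_nbrs hcyc hb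
    have hxc : x = c := by
      rcases hx with h | h
      · exact cp_out_only x h
      · exact absurd h (cp_no_in hcV _)
    have hyc : y = c := by
      rcases hy with h | h
      · exact cp_out_only y h
      · exact absurd h (cp_no_in hcV _)
    exact hxy (hxc.trans hyc.symm)
  · refine hasem l ⟨hcyc.1, ?_, hcyc.2.2.1, hcyc.2.2.2.1, ?_⟩
    · intro x hx
      rcases Finset.mem_insert.1 (hcyc.2.1 x hx) with rfl | h
      · exact absurd hx hb
      · exact cE_sub_verts h
    · refine chain'_imp_mem hcyc.2.2.2.2 fun x hx y hy h => ?_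
      rcases h with h | h
      · rcases mem_DE_edges.1 h with heq | hfe
        · exfalso
          have h2 : x = frc D := congrArg Prod.fst heq
          rw [h2] at hx
          exact hb hx
        · exact Or.inl (mem_fEs.1 hfe).1
      · rcases mem_DE_edges.1 h with heq | hfe
        · exfalso
          have h2 : y = frc D := congrArg Prod.fst heq
          rw [h2] at hy
          exact hb hy
        · exact Or.inr (mem_fEs.1 hfe).1

lemma DW_Q {D : DG} {a c : ℕ} (hQ : IsQGraph D) (hac : (a, c) ∈ D.edges)
    (ha : D.isInner a) : IsQGraph (DW D a c) :=
  ⟨DW_oriented hQ.1 ha.1, DW_conn hQ.1 ha.1, DW_asem hQ.1 hQ.2.2.1 ha.1,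
    DW_WEF hQ hac ha, a, a_inner_DW hQ hac ha⟩

lemma DE_Q {D : DG} {a c : ℕ} (hQ : IsQGraph D) (hac : (a, c) ∈ D.edges)
    (hc : D.isInner c) : IsQGraph (DE D a c) :=
  ⟨DE_oriented hQ.1 hc.1 (mem_cE.2 ⟨hc.1, c_not_cW hQ.1 hQ.2.2.1 hac⟩),
    DE_conn hQ hac, DE_asem hQ.1 hQ.2.2.1 hc.1, DE_WEF hQ hac hc, c, c_inner_DE hQ hac hc⟩


lemma DW_card {D : DG} {a c : ℕ} (hQ : IsQGraph D) (hac : (a, c) ∈ D.edges)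
    (hc : D.isInner c) : (DW D a c).edges.card < D.edges.card := by
  obtain ⟨z, hz⟩ := hc.2.2
  have hcz_nfW : (c, z) ∉ fWs D a c := by
    intro h
    exact c_not_cW hQ.1 hQ.2.2.1 hac (mem_fWs.1 h).2.1
  have hac_nfW : (a, c) ∉ insert (c, z) (fWs D a c) := by
    intro h
    rcases Finset.mem_insert.1 h with h | h
    · exact a_ne_c hQ.1 hac (congrArg Prod.fst h)
    · exact c_not_cW hQ.1 hQ.2.2.1 hac (mem_fWs.1 h).2.2
  have hsub : insert (a, c) (insert (c, z) (fWs D a c)) ⊆ D.edges := by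
    intro e he
    rcases Finset.mem_insert.1 he with rfl | he
    · exact hac
    rcases Finset.mem_insert.1 he with rfl | he
    · exact hz
    · exact (mem_fWs.1 he).1
  have hcard : (fWs D a c).card + 2 ≤ D.edges.card := by
    have h1 := Finset.card_le_card hsub
    rw [Finset.card_insert_of_notMem hac_nfW, Finset.card_insert_of_notMem hcz_nfW] at h1
    omega
  have h2 : (DW D a c).edges.card ≤ (fWs D a c).card + 1 := Finset.card_insert_le _ _
  omega

lemma DE_card {D : DG} {a c : ℕ} (hQ : IsQGraph D) (hac : (a, c) ∈ D.edges)
    (ha : D.isInner a) : (DE D a c).edges.card < D.edges.card := by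
  obtain ⟨x, hx⟩ := ha.2.1
  have haW : a ∈ cW D a c := a_mem_cW ha.1
  have hanE : a ∉ cE D a c := fun h => (mem_cE.1 h).2 haW
  have hxa_nfE : (x, a) ∉ fEs D a c := by
    intro h
    exact hanE (mem_fEs.1 h).2.2
  have hac_nfE : (a, c) ∉ insert (x, a) (fEs D a c) := by
    intro h
    rcases Finset.mem_insert.1 h with h | h
    · exact a_ne_c hQ.1 hac ((congrArg Prod.snd h : c = a)).symm
    · exact hanE (mem_fEs.1 h).2.1
  have hsub : insert (a, c) (insert (x, a) (fEs D a c)) ⊆ D.edges := by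
    intro e he
    rcases Finset.mem_insert.1 he with rfl | he
    · exact hac
    rcases Finset.mem_insert.1 he with rfl | he
    · exact hx
    · exact (mem_fEs.1 he).1
  have hcard : (fEs D a c).card + 2 ≤ D.edges.card := by
    have h1 := Finset.card_le_card hsub
    rw [Finset.card_insert_of_notMem hac_nfE, Finset.card_insert_of_notMem hxa_nfE] at h1
    omega
  have h2 : (DE D a c).edges.card ≤ (fEs D a c).card + 1 := Finset.card_insert_le _ _
  omega

lemma cut_disj {D : DG} {a c : ℕ} :
    Disjoint (DW D a c).verts (DE D a c).verts := by
  rw [Finset.disjoint_left]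
  intro x hx hy
  rcases Finset.mem_insert.1 hx with rfl | hx
  · rcases Finset.mem_insert.1 hy with h | h
    · exact frb_ne_frc D h
    · exact frb_not_mem D (cE_sub_verts h)
  · rcases Finset.mem_insert.1 hy with rfl | hy
    · exact frc_not_mem D (cW_sub_verts hx)
    · exact (mem_cE.1 hy).2 hx

lemma cut_eq {D : DG} {a c : ℕ} (hQ : IsQGraph D) (hac : (a, c) ∈ D.edges) :
    D = DG.cut (DW D a c) (DE D a c) (a, frb D) (frc D, c) := by
  have hor := hQ.1
  refine DG.ext' ?_ ?_
  · -- vertices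
    ext v
    simp only [DG.cut, DW, DE, Finset.mem_sdiff, Finset.mem_union, Finset.mem_insert,
      Finset.mem_singleton]
    constructor
    · intro hv
      refine ⟨?_, ?_⟩
      · by_cases h : v ∈ cW D a c
        · exact Or.inl (Or.inr h)
        · exact Or.inr (Or.inr (mem_cE.2 ⟨hv, h⟩))
      · rintro (h | h)
        · exact frb_not_mem D (h ▸ hv)
        · exact frc_not_mem D (h ▸ hv)
    · rintro ⟨h1, h2⟩
      rcases h1 with (rfl | h) | (rfl | h)
      · exact absurd (Or.inl rfl) h2
      · exact cW_sub_verts h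
      · exact absurd (Or.inr rfl) h2
      · exact cE_sub_verts h
  · -- edges
    have hW : ((DW D a c).edges).erase (a, frb D) = fWs D a c := by
      refine Finset.erase_insert ?_
      intro h
      exact frb_not_mem D (hor.1 _ (mem_fWs.1 h).1).2
    have hE : ((DE D a c).edges).erase (frc D, c) = fEs D a c := by
      refine Finset.erase_insert ?_
      intro h
      exact frc_not_mem D (hor.1 _ (mem_fEs.1 h).1).1
    show D.edges = insert ((a, frb D).1, (frc D, c).2) _
    rw [hW, hE]
    ext e
    simp only [Finset.mem_insert, Finset.mem_union]
    constructor
    · intro he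
      by_cases h : e = (a, c)
      · exact Or.inl h
      · exact Or.inr (edge_side hor he h)
    · rintro (rfl | he | he)
      · exact hac
      · exact (mem_fWs.1 he).1
      · exact (mem_fEs.1 he).1

lemma d_ne_abp {D : DG} {a c : ℕ} {d : ℕ × ℕ} (hor : D.IsOriented)
    (hd : d ∈ D.edges) : d ≠ (a, frb D) := by
  intro h
  have h2 : d.2 = frb D := congrArg Prod.snd h
  have h3 := (hor.1 _ hd).2
  rw [h2] at h3
  exact frb_not_mem D h3

lemma d_ne_cpc {D : DG} {a c : ℕ} {d : ℕ × ℕ} (hor : D.IsOriented)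
    (hd : d ∈ D.edges) : d ≠ (frc D, c) := by
  intro h
  have h2 : d.1 = frc D := congrArg Prod.fst h
  have h3 := (hor.1 _ hd).1
  rw [h2] at h3
  exact frc_not_mem D h3

lemma isXEdge_mem {D : DG} {X : XDir} {d : ℕ × ℕ} (hd : D.isXEdge X d) :
    d ∈ D.edges := by
  cases X
  · exact hd.1
  · exact hd.1

lemma d_not_ac {D : DG} {a c : ℕ} {X : XDir} {d : ℕ × ℕ} (hd : D.isXEdge X d)
    (ha : D.isInner a) (hc : D.isInner c) : d ≠ (a, c) := by
  intro h
  cases X with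
  | W =>
    obtain ⟨x, hx⟩ := ha.2.1
    have h1 : d.1 = a := congrArg Prod.fst h
    exact hd.2.2 x (by rw [h1]; exact hx)
  | E =>
    obtain ⟨z, hz⟩ := hc.2.2
    have h2 : d.2 = c := congrArg Prod.snd h
    exact hd.2.2 z (by rw [h2]; exact hz)

lemma isXEdge_DW {D : DG} {a c : ℕ} {X : XDir} {d : ℕ × ℕ} (hQ : IsQGraph D)
    (hac : (a, c) ∈ D.edges) (ha : D.isInner a) (hd : D.isXEdge X d)
    (hdW : d ∈ fWs D a c) : (DW D a c).isXEdge X d := by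
  have hor := hQ.1
  have hasem := hQ.2.2.1
  obtain ⟨hdD, h1, h2⟩ := mem_fWs.1 hdW
  have hmem : d ∈ (DW D a c).edges := mem_DW_edges.2 (Or.inr hdW)
  cases X with
  | W =>
    refine ⟨hmem, Finset.mem_insert_of_mem h1, fun x hx => ?_⟩
    exact hd.2.2 x ((DW_in_iff hor hasem hac h1).1 hx)
  | E =>
    have hnea : d.2 ≠ a := by
      intro h
      exact hd.2.2 c (by rw [h]; exact hac)
    refine ⟨hmem, Finset.mem_insert_of_mem h2, fun z hz => ?_⟩
    exact hd.2.2 z ((DW_out_iff hor h2 hnea).1 hz)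

lemma isXEdge_DE {D : DG} {a c : ℕ} {X : XDir} {d : ℕ × ℕ} (hQ : IsQGraph D)
    (hac : (a, c) ∈ D.edges) (hc : D.isInner c) (hd : D.isXEdge X d)
    (hdE : d ∈ fEs D a c) : (DE D a c).isXEdge X d := by
  have hor := hQ.1
  have haW : a ∈ cW D a c := a_mem_cW (hor.1 _ hac).1
  obtain ⟨hdD, h1, h2⟩ := mem_fEs.1 hdE
  have hmem : d ∈ (DE D a c).edges := mem_DE_edges.2 (Or.inr hdE)
  cases X with
  | W =>
    have hnec : d.1 ≠ c := by
      intro h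
      obtain ⟨x, hx⟩ := hc.2.1
      exact hd.2.2 x (by rw [h]; exact hx)
    refine ⟨hmem, Finset.mem_insert_of_mem h1, fun x hx => ?_⟩
    exact hd.2.2 x ((DE_in_iff hor h1 hnec).1 hx)
  | E =>
    refine ⟨hmem, Finset.mem_insert_of_mem h2, fun z hz => ?_⟩
    exact hd.2.2 z ((DE_out_iff hor h2 haW).1 hz)

lemma isXEdge_abp {D : DG} {a c : ℕ} (haV : a ∈ D.verts) :
    (DW D a c).isXEdge XDir.E (a, frb D) :=
  (DW_funcE haV).1

lemma isXEdge_cpc {D : DG} {a c : ℕ} (hcV : c ∈ D.verts) (hcE : c ∈ cE D a c) :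
    (DE D a c).isXEdge XDir.W (frc D, c) :=
  (DE_funcW hcV hcE).1


end CutCase


/-- Proposition 7.1: for every Q-graph `D`, every `X ∈ {W, E}` and every
`X`-edge `d` of `D`, there is a construction `G` of a global Q-graph whose
root graph is `D` such that `NX(G) = SX(G) = d`. -/
theorem prop_7_1 (D : DG) (hQ : IsQGraph D) (X : XDir) (d : ℕ × ℕ)
    (hd : D.isXEdge X d) :
    ∃ G : CTree, IsConstructionQ G ∧ G.rootGraph = D ∧
      G.dist YDir.N X = d ∧ G.dist YDir.S X = d := by
  suffices h : ∀ n (D' : DG), D'.edges.card ≤ n → IsQGraph D' → ∀ X' d',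
      D'.isXEdge X' d' →
      ∃ G : CTree, IsConstructionQ G ∧ G.rootGraph = D' ∧
        G.dist YDir.N X' = d' ∧ G.dist YDir.S X' = d' by
    exact h D.edges.card D le_rfl hQ X d hd
  intro n
  induction n with
  | zero =>
    intro D hcard hQ X d hd
    exfalso
    have hmem := isXEdge_mem hd
    have hemp : D.edges = ∅ := Finset.card_eq_zero.1 (le_antisymm hcard (Nat.zero_le _))
    rw [hemp] at hmem
    simp at hmem
  | succ n ih =>
    intro D hcard hQ X d hd
    by_cases hno2 : ∀ e ∈ D.edges, ¬ (D.isInner e.1 ∧ D.isInner e.2)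
    · exact base_construct hQ hno2 X d hd
    · push_neg at hno2
      obtain ⟨e, he, h1, h2⟩ := hno2
      obtain ⟨a, c⟩ := e
      have hac : (a, c) ∈ D.edges := he
      have ha : D.isInner a := h1
      have hc : D.isInner c := h2
      have hQW : IsQGraph (DW D a c) := DW_Q hQ hac ha
      have hQE : IsQGraph (DE D a c) := DE_Q hQ hac hc
      have hcWle : (DW D a c).edges.card ≤ n := by
        have := DW_card hQ hac hc; omega
      have hcEle : (DE D a c).edges.card ≤ n := by
        have := DE_card hQ hac ha; omega
      have hcEmem : c ∈ cE D a c := mem_cE.2 ⟨hc.1, c_not_cW hQ.1 hQ.2.2.1 hac⟩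
      have hdmem : d ∈ D.edges := isXEdge_mem hd
      have hdac : d ≠ (a, c) := d_not_ac hd ha hc
      rcases edge_side hQ.1 hdmem hdac with hdside | hdside
      · -- d lies in the west factor
        obtain ⟨GW, hGWc, hGWroot, hGWn, hGWs⟩ :=
          ih (DW D a c) hcWle hQW X d (isXEdge_DW hQ hac ha hd hdside)
        obtain ⟨GE, hGEc, hGEroot, hGEn, hGEs⟩ :=
          ih (DE D a c) hcEle hQE XDir.W (frc D, c) (isXEdge_cpc hc.1 hcEmem)
        refine ⟨CTree.node D
          (fun Y X' => match X' with
            | XDir.W => if (frc D, c) = GE.dist Y XDir.W then GW.dist Y XDir.W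
                        else GE.dist Y XDir.W
            | XDir.E => if (a, frb D) = GW.dist Y XDir.E then GE.dist Y XDir.E
                        else GW.dist Y XDir.E)
          (a, frb D) (frc D, c) GW GE, ?_, rfl, ?_, ?_⟩
        · refine IsConstructionQ.node D _ _ _ GW GE hGWc hGEc ?_ ?_ ?_ ?_ ?_
            (fun Y => rfl) (fun Y => rfl)
          · rw [hGWroot, hGEroot]; exact cut_disj
          · rw [hGWroot]; exact DW_funcE ha.1
          · rw [hGEroot]; exact DE_funcW hc.1 hcEmem
          · rw [hGWroot, hGEroot]; exact cut_eq hQ hac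
          · intro Y
            cases Y
            · exact Or.inr hGEn.symm
            · exact Or.inr hGEs.symm
        · cases X with
          | W =>
            show (if (frc D, c) = GE.dist YDir.N XDir.W then GW.dist YDir.N XDir.W
              else GE.dist YDir.N XDir.W) = d
            rw [if_pos hGEn.symm]
            exact hGWn
          | E =>
            show (if (a, frb D) = GW.dist YDir.N XDir.E then GE.dist YDir.N XDir.E
              else GW.dist YDir.N XDir.E) = d
            rw [if_neg (by rw [hGWn]; exact (d_ne_abp (a := a) (c := c) hQ.1 hdmem).symm)]
            exact hGWn
        · cases X with
          | W =>
            show (if (frc D, c) = GE.dist YDir.S XDir.W then GW.dist YDir.S XDir.W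
              else GE.dist YDir.S XDir.W) = d
            rw [if_pos hGEs.symm]
            exact hGWs
          | E =>
            show (if (a, frb D) = GW.dist YDir.S XDir.E then GE.dist YDir.S XDir.E
              else GW.dist YDir.S XDir.E) = d
            rw [if_neg (by rw [hGWs]; exact (d_ne_abp (a := a) (c := c) hQ.1 hdmem).symm)]
            exact hGWs
      · -- d lies in the east factor
        obtain ⟨GW, hGWc, hGWroot, hGWn, hGWs⟩ :=
          ih (DW D a c) hcWle hQW XDir.E (a, frb D) (isXEdge_abp ha.1)
        obtain ⟨GE, hGEc, hGEroot, hGEn, hGEs⟩ :=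
          ih (DE D a c) hcEle hQE X d (isXEdge_DE hQ hac hc hd hdside)
        refine ⟨CTree.node D
          (fun Y X' => match X' with
            | XDir.W => if (frc D, c) = GE.dist Y XDir.W then GW.dist Y XDir.W
                        else GE.dist Y XDir.W
            | XDir.E => if (a, frb D) = GW.dist Y XDir.E then GE.dist Y XDir.E
                        else GW.dist Y XDir.E)
          (a, frb D) (frc D, c) GW GE, ?_, rfl, ?_, ?_⟩
        · refine IsConstructionQ.node D _ _ _ GW GE hGWc hGEc ?_ ?_ ?_ ?_ ?_
            (fun Y => rfl) (fun Y => rfl)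
          · rw [hGWroot, hGEroot]; exact cut_disj
          · rw [hGWroot]; exact DW_funcE ha.1
          · rw [hGEroot]; exact DE_funcW hc.1 hcEmem
          · rw [hGWroot, hGEroot]; exact cut_eq hQ hac
          · intro Y
            cases Y
            · exact Or.inl hGWn.symm
            · exact Or.inl hGWs.symm
        · cases X with
          | W =>
            show (if (frc D, c) = GE.dist YDir.N XDir.W then GW.dist YDir.N XDir.W
              else GE.dist YDir.N XDir.W) = d
            rw [if_neg (by rw [hGEn]; exact (d_ne_cpc (a := a) (c := c) hQ.1 hdmem).symm)]
            exact hGEn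
          | E =>
            show (if (a, frb D) = GW.dist YDir.N XDir.E then GE.dist YDir.N XDir.E
              else GW.dist YDir.N XDir.E) = d
            rw [if_pos hGWn.symm]
            exact hGEn
        · cases X with
          | W =>
            show (if (frc D, c) = GE.dist YDir.S XDir.W then GW.dist YDir.S XDir.W
              else GE.dist YDir.S XDir.W) = d
            rw [if_neg (by rw [hGEs]; exact (d_ne_cpc (a := a) (c := c) hQ.1 hdmem).symm)]
            exact hGEs
          | E =>
            show (if (a, frb D) = GW.dist YDir.S XDir.E then GE.dist YDir.S XDir.E
              else GW.dist YDir.S XDir.E) = d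
            rw [if_pos hGWs.symm]
            exact hGEs

end PluralCuts
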